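/- arXiv:1007.4219 — 2 statements merged into one kernel-verified Lean document; each statement's English description precedes it below -/
import Mathlib

section
/- Let G be an orientable ribbon graph such that G = P ⊕ Q, a 1-sum occurring at a vertex v, where Q is a plane ribbon graph. Then the genus of the partial dual G^{E(Q)} is equal to the genus of P; moreover, every vertex of P other than v is also a vertex of G^{E(Q)}. -/
/-- An orientable ribbon graph, encoded combinatorially as a finite set `F` of
flags together with three fixed-point-free involutions `t0`, `t1`, `t2` such
that `t0` and `t2` commute, `t0 ∘ t2` is fixed-point-free, and which is
orientable. -/
structure RibbonGraph : Type 1 where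
  F : Type
  fintype : Fintype F
  t0 : F → F
  t1 : F → F
  t2 : F → F
  t0_invol : Function.Involutive t0
  t1_invol : Function.Involutive t1
  t2_invol : Function.Involutive t2
  t0_ne : ∀ x, t0 x ≠ x
  t1_ne : ∀ x, t1 x ≠ x
  t2_ne : ∀ x, t2 x ≠ x
  comm : ∀ x, t0 (t2 x) = t2 (t0 x)
  t02_ne : ∀ x, t0 (t2 x) ≠ x
  orientable : ∃ s : F → Bool,
    (∀ x, s (t0 x) = !s x) ∧ (∀ x, s (t1 x) = !s x) ∧ (∀ x, s (t2 x) = !s x)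

namespace RibbonGraph

/-- The edge containing a flag `x`: the orbit of `x` under `⟨t0, t2⟩`. -/
def edgeOf (G : RibbonGraph) (x : G.F) : Set G.F :=
  {x, G.t0 x, G.t2 x, G.t0 (G.t2 x)}

/-- The set `E(G)` of edges of `G`. -/
def edgeSet (G : RibbonGraph) : Set (Set G.F) := {e | ∃ x, e = G.edgeOf x}

lemma edgeOf_t0 (G : RibbonGraph) (x : G.F) : G.edgeOf (G.t0 x) = G.edgeOf x := by
  have e1 : G.t0 (G.t0 x) = x := G.t0_invol x
  have e2 : G.t2 (G.t0 x) = G.t0 (G.t2 x) := (G.comm x).symm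
  unfold edgeOf
  rw [e1, e2, G.t0_invol (G.t2 x)]
  ext y
  simp only [Set.mem_insert_iff, Set.mem_singleton_iff]
  tauto

lemma edgeOf_t2 (G : RibbonGraph) (x : G.F) : G.edgeOf (G.t2 x) = G.edgeOf x := by
  have e1 : G.t2 (G.t2 x) = x := G.t2_invol x
  unfold edgeOf
  rw [e1]
  ext y
  simp only [Set.mem_insert_iff, Set.mem_singleton_iff]
  tauto

/-- Two flags lie on the same vertex: the equivalence generated by `t1, t2`. -/
def vertexRel (G : RibbonGraph) : G.F → G.F → Prop :=
  Relation.EqvGen fun x y => y = G.t1 x ∨ y = G.t2 x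

/-- Two flags lie in the same connected component. -/
def compRel (G : RibbonGraph) : G.F → G.F → Prop :=
  Relation.EqvGen fun x y => y = G.t0 x ∨ y = G.t1 x ∨ y = G.t2 x

/-- The number of vertices: the number of orbits of `⟨t1, t2⟩`. -/
noncomputable def numVertices (G : RibbonGraph) : ℕ :=
  Nat.card (Quot (fun x y : G.F => y = G.t1 x ∨ y = G.t2 x))

/-- The number of edges: the number of orbits of `⟨t0, t2⟩`. -/
noncomputable def numEdges (G : RibbonGraph) : ℕ :=
  Nat.card (Quot (fun x y : G.F => y = G.t0 x ∨ y = G.t2 x))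

/-- The number of faces: the number of orbits of `⟨t0, t1⟩`. -/
noncomputable def numFaces (G : RibbonGraph) : ℕ :=
  Nat.card (Quot (fun x y : G.F => y = G.t0 x ∨ y = G.t1 x))

/-- The number of connected components: the number of orbits of `⟨t0, t1, t2⟩`. -/
noncomputable def numComponents (G : RibbonGraph) : ℕ :=
  Nat.card (Quot (fun x y : G.F => y = G.t0 x ∨ y = G.t1 x ∨ y = G.t2 x))

/-- The Euler genus `ε(G) = 2c - v + e - f`. -/
noncomputable def eulerGenus (G : RibbonGraph) : ℤ :=
  2 * (G.numComponents : ℤ) - (G.numVertices : ℤ) + (G.numEdges : ℤ) - (G.numFaces : ℤ)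

/-- A ribbon graph is plane if its Euler genus is zero. -/
def IsPlane (G : RibbonGraph) : Prop := G.eulerGenus = 0

/-- The genus `g(G)`, defined by `ε(G) = 2 g(G)` (for orientable `G`). -/
noncomputable def genus (G : RibbonGraph) : ℤ := G.eulerGenus / 2

/-- `G` is connected if all flags lie in one component. -/
def Connected (G : RibbonGraph) : Prop := ∀ x y : G.F, G.compRel x y

/-- The vertex containing the flag `x`. -/
def vertexOf (G : RibbonGraph) (x : G.F) : Set G.F := {y | G.vertexRel x y}

/-- The set `V(G)` of vertices of `G`. -/
def vertices (G : RibbonGraph) : Set (Set G.F) := {v | ∃ x, v = G.vertexOf x}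

/-- The vertices incident to at least one edge of `B`. -/
def verticesIn (G : RibbonGraph) (B : Set (Set G.F)) : Set (Set G.F) :=
  {v | v ∈ G.vertices ∧ ∃ x ∈ v, G.edgeOf x ∈ B}

/-- An edge `e` is incident to a vertex `w`. -/
def Incid (G : RibbonGraph) (e w : Set G.F) : Prop := ∃ x ∈ e, x ∈ w

open Classical in
/-- The partial dual `G^A` of `G` with respect to a set `A` of edges: the roles
of `t0` and `t2` are swapped on all flags of edges in `A`. -/
noncomputable def pdual (G : RibbonGraph) (A : Set (Set G.F)) : RibbonGraph where
  F := G.F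
  fintype := G.fintype
  t0 := fun x => if G.edgeOf x ∈ A then G.t2 x else G.t0 x
  t1 := G.t1
  t2 := fun x => if G.edgeOf x ∈ A then G.t0 x else G.t2 x
  t0_invol := by
    intro x
    by_cases h : G.edgeOf x ∈ A
    · have h' : G.edgeOf (G.t2 x) ∈ A := by rwa [G.edgeOf_t2]
      simp only [if_pos h, if_pos h']
      exact G.t2_invol x
    · have h' : G.edgeOf (G.t0 x) ∉ A := by rwa [G.edgeOf_t0]
      simp only [if_neg h, if_neg h']
      exact G.t0_invol x
  t1_invol := G.t1_invol
  t2_invol := by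
    intro x
    by_cases h : G.edgeOf x ∈ A
    · have h' : G.edgeOf (G.t0 x) ∈ A := by rwa [G.edgeOf_t0]
      simp only [if_pos h, if_pos h']
      exact G.t0_invol x
    · have h' : G.edgeOf (G.t2 x) ∉ A := by rwa [G.edgeOf_t2]
      simp only [if_neg h, if_neg h']
      exact G.t2_invol x
  t0_ne := by
    intro x
    by_cases h : G.edgeOf x ∈ A
    · simp only [if_pos h]; exact G.t2_ne x
    · simp only [if_neg h]; exact G.t0_ne x
  t1_ne := G.t1_ne
  t2_ne := by
    intro x
    by_cases h : G.edgeOf x ∈ A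
    · simp only [if_pos h]; exact G.t0_ne x
    · simp only [if_neg h]; exact G.t2_ne x
  comm := by
    intro x
    by_cases h : G.edgeOf x ∈ A
    · have h0 : G.edgeOf (G.t0 x) ∈ A := by rwa [G.edgeOf_t0]
      have h2 : G.edgeOf (G.t2 x) ∈ A := by rwa [G.edgeOf_t2]
      simp only [if_pos h, if_pos h0, if_pos h2]
      exact (G.comm x).symm
    · have h0 : G.edgeOf (G.t0 x) ∉ A := by rwa [G.edgeOf_t0]
      have h2 : G.edgeOf (G.t2 x) ∉ A := by rwa [G.edgeOf_t2]
      simp only [if_neg h, if_neg h0, if_neg h2]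
      exact G.comm x
  t02_ne := by
    intro x
    by_cases h : G.edgeOf x ∈ A
    · have h0 : G.edgeOf (G.t0 x) ∈ A := by rwa [G.edgeOf_t0]
      simp only [if_pos h, if_pos h0]
      rw [← G.comm x]
      exact G.t02_ne x
    · have h2 : G.edgeOf (G.t2 x) ∉ A := by rwa [G.edgeOf_t2]
      simp only [if_neg h, if_neg h2]
      exact G.t02_ne x
  orientable := by
    obtain ⟨s, hs0, hs1, hs2⟩ := G.orientable
    refine ⟨s, ?_, hs1, ?_⟩
    · intro x
      by_cases h : G.edgeOf x ∈ A
      · simp only [if_pos h]; exact hs2 x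
      · simp only [if_neg h]; exact hs0 x
    · intro x
      by_cases h : G.edgeOf x ∈ A
      · simp only [if_pos h]; exact hs0 x
      · simp only [if_neg h]; exact hs2 x

/-- The geometric dual `G* = G^{E(G)}`. -/
noncomputable def gdual (G : RibbonGraph) : RibbonGraph := G.pdual G.edgeSet

/-- Equality (equivalence) of ribbon graphs: a bijection of flag sets commuting
with the three involutions. -/
def Equiv (G H : RibbonGraph) : Prop :=
  ∃ ψ : G.F ≃ H.F, (∀ x, ψ (G.t0 x) = H.t0 (ψ x)) ∧
    (∀ x, ψ (G.t1 x) = H.t1 (ψ x)) ∧ (∀ x, ψ (G.t2 x) = H.t2 (ψ x))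

/-- `H` is the ribbon subgraph of `G` induced by the edge set `A`, realized by
the flag embedding `φ`. The embedding identifies the flags of `H` with the
flags of edges in `A`, commutes with `t0` and `t2`, and `t1` of `H` is the
pairing of flags obtained from `t1` of `G` by skipping over flags of the
deleted edges (joining up the cyclic order around each vertex). -/
def IsInducedVia (G H : RibbonGraph) (A : Set (Set G.F)) (φ : H.F → G.F) : Prop :=
  A ⊆ G.edgeSet ∧ Function.Injective φ ∧
  Set.range φ = {x : G.F | G.edgeOf x ∈ A} ∧
  (∀ x, φ (H.t0 x) = G.t0 (φ x)) ∧ (∀ x, φ (H.t2 x) = G.t2 (φ x)) ∧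
  (∀ x, ∃ k : ℕ,
    φ (H.t1 x) = G.t1 ((G.t2 ∘ G.t1)^[k] (φ x)) ∧
    ∀ j < k, G.edgeOf (G.t1 ((G.t2 ∘ G.t1)^[j] (φ x))) ∉ A)

/-- `H` is the ribbon subgraph of `G` induced by the edge set `A` (that is,
`H = G|_A`, consisting of the edges in `A` and the vertices incident to them). -/
def IsInducedSubgraph (G H : RibbonGraph) (A : Set (Set G.F)) : Prop :=
  ∃ φ : H.F → G.F, IsInducedVia G H A φ

/-- The ribbon subgraph `G|_A` induced by the edge set `A` is plane. -/
def PlanePart (G : RibbonGraph) (A : Set (Set G.F)) : Prop :=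
  ∃ H : RibbonGraph, IsInducedSubgraph G H A ∧ H.IsPlane

/-- Connectivity of two flags within the ribbon subgraph induced by `B`. -/
def subRel (G : RibbonGraph) (B : Set (Set G.F)) : G.F → G.F → Prop :=
  Relation.EqvGen fun x y =>
    G.edgeOf x ∈ B ∧ G.edgeOf y ∈ B ∧ (y = G.t0 x ∨ G.vertexRel x y)

/-- The set of edges of the connected component of the ribbon subgraph induced
by `B` that contains the flag `x`. -/
def componentOf (G : RibbonGraph) (B : Set (Set G.F)) (x : G.F) : Set (Set G.F) :=
  {e | e ∈ B ∧ ∃ y ∈ e, G.subRel B x y}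

/-- `C` is (the edge set of) a connected component of the ribbon subgraph
induced by `B`. -/
def IsComponentOf (G : RibbonGraph) (C B : Set (Set G.F)) : Prop :=
  ∃ x : G.F, G.edgeOf x ∈ B ∧ C = G.componentOf B x

/-- The ribbon subgraph induced by `B ∪ C` is the 1-sum of the (non-trivial)
ribbon subgraphs induced by `B` and by `C`, occurring at the vertex `v`: the
edge sets are disjoint and `v` is the only common vertex. -/
def IsOneSumAt (G : RibbonGraph) (B C : Set (Set G.F)) (v : Set G.F) : Prop :=
  B ⊆ G.edgeSet ∧ C ⊆ G.edgeSet ∧ B.Nonempty ∧ C.Nonempty ∧ Disjoint B C ∧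
  v ∈ G.vertices ∧ G.verticesIn B ∩ G.verticesIn C = {v}

/-- The ribbon subgraph induced by `B ∪ C` is the join of the ribbon subgraphs
induced by `B` and by `C` at the vertex `v`: it is a 1-sum at `v` and the flags
of edges of `B` at `v` form an interval in the cyclic order around `v`
(equivalently, there are at most two `t1`-corners at `v` between an edge of `B`
and an edge of `C`). -/
def IsJoinAt (G : RibbonGraph) (B C : Set (Set G.F)) (v : Set G.F) : Prop :=
  G.IsOneSumAt B C v ∧
  Nat.card {x : G.F // x ∈ v ∧ G.edgeOf x ∈ B ∧ G.edgeOf (G.t1 x) ∈ C} ≤ 2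

/-- `G` is the join `P ∨ Q` of the ribbon graphs `P` and `Q`. -/
def IsJoinDecomp (G P Q : RibbonGraph) : Prop :=
  ∃ (Bp Bq : Set (Set G.F)) (v : Set G.F),
    IsInducedSubgraph G P Bp ∧ IsInducedSubgraph G Q Bq ∧
    G.IsJoinAt Bp Bq v ∧ Bp ∪ Bq = G.edgeSet

/-- `G` is prime: it cannot be expressed as a join of two ribbon graphs. -/
def Prime (G : RibbonGraph) : Prop :=
  ¬ ∃ (B C : Set (Set G.F)) (v : Set G.F), B ∪ C = G.edgeSet ∧ G.IsJoinAt B C v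

/-- The ribbon subgraph `G|_A` induced by the edge set `A` is prime. -/
def PrimePart (G : RibbonGraph) (A : Set (Set G.F)) : Prop :=
  ∃ H : RibbonGraph, IsInducedSubgraph G H A ∧ H.Prime

/-- `A` defines a plane-biseparation of the ribbon subgraph of `G` induced by
the edge set `W` (where `A ⊆ W`): either trivially (`A = W` or `A = ∅`, both
parts plane); or both parts `P_A = G|_A` and `Q_A = G|_{W ∖ A}` are plane and
the subgraph induced by `W` can be written as a sequence of 1-sums of the
connected components of `P_A` and `Q_A` such that every 1-sum occurs at a
distinct vertex and involves exactly one component of `P_A` and one of `Q_A`. -/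
def DefinesPlaneBisepOn (G : RibbonGraph) (W A : Set (Set G.F)) : Prop :=
  ((A = W ∨ A = ∅) ∧ G.PlanePart A ∧ G.PlanePart (W \ A)) ∨
  (G.PlanePart A ∧ G.PlanePart (W \ A) ∧
    ∃ (l : ℕ) (H : Fin l → Set (Set G.F)) (vtx : Fin l → Set G.F),
      1 ≤ l ∧ (⋃ i, H i) = W ∧
      (∀ i, G.IsComponentOf (H i) A ∨ G.IsComponentOf (H i) (W \ A)) ∧
      (∀ i : Fin l, 0 < i.val →
        G.IsOneSumAt (⋃ j : Fin l, ⋃ (_ : j < i), H j) (H i) (vtx i)) ∧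
      (∀ i j : Fin l, 0 < i.val → 0 < j.val → vtx i = vtx j → i = j) ∧
      (∀ i : Fin l, 0 < i.val → ∃! j : Fin l, j < i ∧ vtx i ∈ G.verticesIn (H j)) ∧
      (∀ i j : Fin l, 0 < i.val → j < i → vtx i ∈ G.verticesIn (H j) →
        (G.IsComponentOf (H i) A ↔ G.IsComponentOf (H j) (W \ A))))

/-- `A` defines a plane-biseparation of `G`: the restriction of `A` to each
connected component of `G` defines a plane-biseparation of that component. -/
def DefinesPlaneBisep (G : RibbonGraph) (A : Set (Set G.F)) : Prop :=
  ∀ C, G.IsComponentOf C G.edgeSet → G.DefinesPlaneBisepOn C (A ∩ C)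

/-- `G` is written as a (left-associated) sequence of joins
`G = H 0 ∨ H 1 ∨ ⋯ ∨ H (l-1)` of the ribbon subgraphs induced by the `H i`. -/
def IsSeqOfJoins (G : RibbonGraph) (l : ℕ) (H : Fin l → Set (Set G.F)) : Prop :=
  1 ≤ l ∧ (∀ i, H i ⊆ G.edgeSet) ∧ (⋃ i, H i) = G.edgeSet ∧
  ∀ i : Fin l, 0 < i.val →
    ∃ v : Set G.F, G.IsJoinAt (⋃ j : Fin l, ⋃ (_ : j < i), H j) (H i) v

/-- `A` defines a plane-join-biseparation of `G`: `G = H1 ∨ ⋯ ∨ Hl` with each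
`Hi` plane and `A` the union of the edge sets of some of the `Hi`. -/
def DefinesPlaneJoinBisep (G : RibbonGraph) (A : Set (Set G.F)) : Prop :=
  ∃ (l : ℕ) (H : Fin l → Set (Set G.F)) (I : Set (Fin l)),
    G.IsSeqOfJoins l H ∧ (∀ i, G.PlanePart (H i)) ∧ A = ⋃ i ∈ I, H i

/-- The dual of a join-summand move: `G = H1 ∨ H2` is replaced by
`G^{E(H2)} = H1 ∨ H2*`. -/
def DJSMove (G G' : RibbonGraph) : Prop :=
  ∃ (B C : Set (Set G.F)) (v : Set G.F),
    B ∪ C = G.edgeSet ∧ G.IsJoinAt B C v ∧ Equiv G' (G.pdual C)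

/-- `G ∼ H`: `H` is obtained from `G` by a finite sequence of dual of a
join-summand moves, or `H = G`, or `H = G*`. -/
def Sim (G H : RibbonGraph) : Prop :=
  Relation.ReflTransGen DJSMove G H ∨ Equiv G H ∨ Equiv H G.gdual

/-- Toggling a join-summand: for an expression `G = K1 ∨ ⋯ ∨ Kr` as a sequence
of joins, replace the edge set `C` by the symmetric difference `C Δ E(Ki)`. -/
def ToggleJoinSummand (G : RibbonGraph) (C C' : Set (Set G.F)) : Prop :=
  ∃ (l : ℕ) (H : Fin l → Set (Set G.F)) (i : Fin l),
    G.IsSeqOfJoins l H ∧ C' = symmDiff C (H i)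

/-- The disjoint union of two ribbon graphs. -/
def disjUnion (P Q : RibbonGraph) : RibbonGraph where
  F := P.F ⊕ Q.F
  fintype := by haveI := P.fintype; haveI := Q.fintype; infer_instance
  t0 := fun x => match x with
    | .inl a => .inl (P.t0 a)
    | .inr b => .inr (Q.t0 b)
  t1 := fun x => match x with
    | .inl a => .inl (P.t1 a)
    | .inr b => .inr (Q.t1 b)
  t2 := fun x => match x with
    | .inl a => .inl (P.t2 a)
    | .inr b => .inr (Q.t2 b)
  t0_invol := by
    rintro (a | b)
    · exact congrArg Sum.inl (P.t0_invol a)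
    · exact congrArg Sum.inr (Q.t0_invol b)
  t1_invol := by
    rintro (a | b)
    · exact congrArg Sum.inl (P.t1_invol a)
    · exact congrArg Sum.inr (Q.t1_invol b)
  t2_invol := by
    rintro (a | b)
    · exact congrArg Sum.inl (P.t2_invol a)
    · exact congrArg Sum.inr (Q.t2_invol b)
  t0_ne := by
    rintro (a | b) h
    · exact P.t0_ne a (Sum.inl_injective h)
    · exact Q.t0_ne b (Sum.inr_injective h)
  t1_ne := by
    rintro (a | b) h
    · exact P.t1_ne a (Sum.inl_injective h)
    · exact Q.t1_ne b (Sum.inr_injective h)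
  t2_ne := by
    rintro (a | b) h
    · exact P.t2_ne a (Sum.inl_injective h)
    · exact Q.t2_ne b (Sum.inr_injective h)
  comm := by
    rintro (a | b)
    · exact congrArg Sum.inl (P.comm a)
    · exact congrArg Sum.inr (Q.comm b)
  t02_ne := by
    rintro (a | b) h
    · exact P.t02_ne a (Sum.inl_injective h)
    · exact Q.t02_ne b (Sum.inr_injective h)
  orientable := by
    obtain ⟨sP, hP0, hP1, hP2⟩ := P.orientable
    obtain ⟨sQ, hQ0, hQ1, hQ2⟩ := Q.orientable
    refine ⟨Sum.elim sP sQ, ?_, ?_, ?_⟩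
    · rintro (a | b)
      · exact hP0 a
      · exact hQ0 b
    · rintro (a | b)
      · exact hP1 a
      · exact hQ1 b
    · rintro (a | b)
      · exact hP2 a
      · exact hQ2 b

/-- The underlying simple graph of a ribbon graph: vertices are the vertices of
`G`, and two distinct vertices are adjacent if some edge is incident to both. -/
def usg (G : RibbonGraph) : SimpleGraph ↥G.vertices where
  Adj a b := a ≠ b ∧ ∃ e ∈ G.edgeSet, G.Incid e ↑a ∧ G.Incid e ↑b
  symm := by
    constructor
    rintro a b ⟨hne, e, he, h1, h2⟩
    exact ⟨hne.symm, e, he, h2, h1⟩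
  loopless := by
    constructor
    rintro a ⟨hne, -⟩
    exact hne rfl

/-- Isomorphism of the underlying (multi)graphs of two ribbon graphs: a pair of
bijections on vertices and on edges preserving incidence. -/
def UnderlyingIso (G H : RibbonGraph) : Prop :=
  ∃ (fv : ↥G.vertices ≃ ↥H.vertices) (fe : ↥G.edgeSet ≃ ↥H.edgeSet),
    ∀ (e : ↥G.edgeSet) (w : ↥G.vertices),
      G.Incid ↑e ↑w ↔ H.Incid ↑(fe e) ↑(fv w)

/-- `Γ₀` is a minor of `Γ`: there are pairwise disjoint nonempty connected
branch sets realizing the adjacencies of `Γ₀`. -/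
def MinorOf {W V : Type*} (Γ₀ : SimpleGraph W) (Γ : SimpleGraph V) : Prop :=
  ∃ f : W → Set V,
    (∀ w, (f w).Nonempty) ∧
    (∀ w, (Γ.induce (f w)).Connected) ∧
    (Pairwise fun w w' => Disjoint (f w) (f w')) ∧
    ∀ w w', Γ₀.Adj w w' → ∃ a ∈ f w, ∃ b ∈ f w', Γ.Adj a b

/-- `G` is `k`-connected: its underlying graph is connected, has at least
`k + 1` vertices, and remains connected after deleting any set of fewer than
`k` vertices. -/
def KConnected (G : RibbonGraph) (k : ℕ) : Prop :=
  G.Connected ∧ k + 1 ≤ Nat.card ↥G.vertices ∧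
  ∀ S : Set (Set G.F), S ⊆ G.vertices → Nat.card ↥S < k →
    ∀ a ∈ G.vertices, a ∉ S → ∀ b ∈ G.vertices, b ∉ S →
      Relation.EqvGen (fun u w => u ∈ G.vertices ∧ w ∈ G.vertices ∧ u ∉ S ∧ w ∉ S ∧
        ∃ e ∈ G.edgeSet, G.Incid e u ∧ G.Incid e w) a b

end RibbonGraph

/-! ### Auxiliary development for `genus_pdual_of_oneSum` -/

namespace RibbonGraph

open Relation

section Basics

variable (G : RibbonGraph)

lemma card_quot_congr {α : Type*} {r r' : α → α → Prop}
    (h : ∀ x y, r x y ↔ r' x y) : Nat.card (Quot r) = Nat.card (Quot r') := by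
  have : r = r' := by funext x y; exact propext (h x y)
  rw [this]

variable {G}

lemma vertexRel_refl (x : G.F) : G.vertexRel x x := EqvGen.refl x

lemma vertexRel_symm {x y : G.F} (h : G.vertexRel x y) : G.vertexRel y x :=
  EqvGen.symm _ _ h

lemma vertexRel_trans {x y z : G.F} (h : G.vertexRel x y) (h' : G.vertexRel y z) :
    G.vertexRel x z := EqvGen.trans _ _ _ h h'

lemma vertexRel_t1 (x : G.F) : G.vertexRel x (G.t1 x) :=
  EqvGen.rel _ _ (Or.inl rfl)

lemma vertexRel_t2 (x : G.F) : G.vertexRel x (G.t2 x) :=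
  EqvGen.rel _ _ (Or.inr rfl)

lemma mem_vertexOf_self (x : G.F) : x ∈ G.vertexOf x := vertexRel_refl x

lemma vertexOf_eq_of_rel {x y : G.F} (h : G.vertexRel x y) :
    G.vertexOf x = G.vertexOf y := by
  ext z
  exact ⟨fun hz => vertexRel_trans (vertexRel_symm h) hz,
         fun hz => vertexRel_trans h hz⟩

lemma vertexOf_t1' (x : G.F) : G.vertexOf (G.t1 x) = G.vertexOf x :=
  (vertexOf_eq_of_rel (vertexRel_t1 x)).symm

lemma vertexOf_t2' (x : G.F) : G.vertexOf (G.t2 x) = G.vertexOf x :=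
  (vertexOf_eq_of_rel (vertexRel_t2 x)).symm

lemma vertexOf_mem_vertices (x : G.F) : G.vertexOf x ∈ G.vertices := ⟨x, rfl⟩

lemma eq_vertexOf_of_mem {w : Set G.F} {x : G.F} (hw : w ∈ G.vertices)
    (hx : x ∈ w) : w = G.vertexOf x := by
  obtain ⟨x₀, rfl⟩ := hw
  exact vertexOf_eq_of_rel hx

lemma mem_edgeOf_self (x : G.F) : x ∈ G.edgeOf x := Or.inl rfl

lemma edgeOf_mem_edgeSet (x : G.F) : G.edgeOf x ∈ G.edgeSet := ⟨x, rfl⟩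

lemma edgeOf_t1_mem_vertex (x : G.F) : G.t1 x ∈ G.vertexOf x := vertexRel_t1 x

lemma t2_mem_vertexOf (x : G.F) : G.t2 x ∈ G.vertexOf x := vertexRel_t2 x

/-- Membership in a vertex class is preserved by `t1` and `t2`. -/
lemma t1_mem_of_mem {x y : G.F} (h : y ∈ G.vertexOf x) : G.t1 y ∈ G.vertexOf x :=
  vertexRel_trans h (vertexRel_t1 y)

lemma t2_mem_of_mem {x y : G.F} (h : y ∈ G.vertexOf x) : G.t2 y ∈ G.vertexOf x :=
  vertexRel_trans h (vertexRel_t2 y)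

end Basics

section Spine

variable {G : RibbonGraph}

/-- The forward shift `t2 ∘ t1` around a vertex. -/
@[reducible] def sF (G : RibbonGraph) : G.F → G.F := G.t2 ∘ G.t1

/-- The backward shift `t1 ∘ t2` around a vertex. -/
@[reducible] def sB (G : RibbonGraph) : G.F → G.F := G.t1 ∘ G.t2

lemma sB_sF (x : G.F) : sB G (sF G x) = x := by
  simp only [sF, sB, Function.comp_apply, G.t2_invol (G.t1 x), G.t1_invol x]

lemma sF_sB (x : G.F) : sF G (sB G x) = x := by
  simp only [sF, sB, Function.comp_apply, G.t1_invol (G.t2 x), G.t2_invol x]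

lemma sF_injective : Function.Injective (sF G) :=
  Function.LeftInverse.injective sB_sF

lemma sB_iter_sF_iter (k : ℕ) (x : G.F) : (sB G)^[k] ((sF G)^[k] x) = x :=
  (Function.LeftInverse.iterate sB_sF k) x

lemma sF_iter_sB_iter (k : ℕ) (x : G.F) : (sF G)^[k] ((sB G)^[k] x) = x :=
  (Function.LeftInverse.iterate sF_sB k) x

lemma sF_iter_injective (k : ℕ) : Function.Injective ((sF G)^[k]) :=
  Function.LeftInverse.injective (Function.LeftInverse.iterate sB_sF k)

/-- The alternating walk around the vertex of `x`:
`x, t1 x, t2 t1 x, t1 t2 t1 x, …`. -/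
def spine (G : RibbonGraph) (x : G.F) (j : ℕ) : G.F :=
  if j % 2 = 0 then (sF G)^[j / 2] x else G.t1 ((sF G)^[j / 2] x)

lemma spine_zero (x : G.F) : spine G x 0 = x := by simp [spine]

lemma spine_even (x : G.F) (k : ℕ) : spine G x (2 * k) = (sF G)^[k] x := by
  simp [spine, Nat.mul_div_cancel_left, Nat.mul_mod_right]

lemma spine_odd (x : G.F) (k : ℕ) :
    spine G x (2 * k + 1) = G.t1 ((sF G)^[k] x) := by
  have h1 : (2 * k + 1) % 2 = 1 := by omega
  have h2 : (2 * k + 1) / 2 = k := by omega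
  simp [spine, h1, h2]

lemma spine_one (x : G.F) : spine G x 1 = G.t1 x := by
  have := spine_odd x 0; simpa using this

lemma spine_succ_even (x : G.F) (k : ℕ) :
    spine G x (2 * k + 1) = G.t1 (spine G x (2 * k)) := by
  rw [spine_even, spine_odd]

lemma spine_succ_odd (x : G.F) (k : ℕ) :
    spine G x (2 * k + 2) = G.t2 (spine G x (2 * k + 1)) := by
  rw [spine_odd]
  have : 2 * k + 2 = 2 * (k + 1) := by ring
  rw [this, spine_even, Function.iterate_succ_apply']
  rfl

lemma spine_succ (x : G.F) (j : ℕ) :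
    spine G x (j + 1) = if j % 2 = 0 then G.t1 (spine G x j) else G.t2 (spine G x j) := by
  rcases Nat.even_or_odd j with ⟨k, hk⟩ | ⟨k, hk⟩
  · have hj : j = 2 * k := by omega
    rw [hj, if_pos (by omega)]
    exact spine_succ_even x k
  · have hj : j = 2 * k + 1 := by omega
    rw [hj, if_neg (by omega)]
    exact spine_succ_odd x k

lemma spine_mem_vertexOf (x : G.F) (j : ℕ) : spine G x j ∈ G.vertexOf x := by
  induction j with
  | zero => rw [spine_zero]; exact mem_vertexOf_self x
  | succ n ih =>
      rw [spine_succ]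
      split
      · exact t1_mem_of_mem ih
      · exact t2_mem_of_mem ih

/-- Existence of a period for the forward shift. -/
lemma exists_sF_period (x : G.F) : ∃ N, 0 < N ∧ (sF G)^[N] x = x := by
  haveI := G.fintype
  obtain ⟨a, b, hne, hab⟩ :=
    Finite.exists_ne_map_eq_of_infinite (fun n : ℕ => (sF G)^[n] x)
  rcases Nat.lt_or_ge a b with h | h
  · refine ⟨b - a, by omega, ?_⟩
    apply sF_iter_injective a
    rw [← Function.iterate_add_apply]
    have he : a + (b - a) = b := by omega
    rw [he, ← hab]
  · have hlt : b < a := by omega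
    refine ⟨a - b, by omega, ?_⟩
    apply sF_iter_injective b
    rw [← Function.iterate_add_apply]
    have he : b + (a - b) = a := by omega
    rw [he, hab]

variable {x : G.F} {N : ℕ}

section Period

lemma sB_iter_eq_sF_iter (hN : (sF G)^[N] x = x) {k : ℕ} (hk : k ≤ N) :
    (sB G)^[k] x = (sF G)^[N - k] x := by
  apply sF_iter_injective k
  rw [sF_iter_sB_iter, ← Function.iterate_add_apply]
  have : k + (N - k) = N := by omega
  rw [this, hN]

lemma spine_add_period (hN : (sF G)^[N] x = x) (j : ℕ) : spine G x (j + 2 * N) = spine G x j := by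
  have hdiv : (j + 2 * N) / 2 = j / 2 + N := by omega
  have hmod : (j + 2 * N) % 2 = j % 2 := by omega
  unfold spine
  rw [hdiv, hmod, Function.iterate_add_apply, hN]

lemma spine_mod (hN : (sF G)^[N] x = x) (hN0 : 0 < N) (j : ℕ) :
    spine G x j = spine G x (j % (2 * N)) := by
  induction j using Nat.strong_induction_on with
  | _ j ih =>
    rcases Nat.lt_or_ge j (2 * N) with h | h
    · rw [Nat.mod_eq_of_lt h]
    · have h1 : j = (j - 2 * N) + 2 * N := by omega
      rw [h1, spine_add_period hN, ih (j - 2 * N) (by omega),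
        Nat.add_mod_right]

/-- Every flag of the vertex of `x` lies on the spine of `x` (within one period). -/
lemma vertexOf_subset_spine (hN : (sF G)^[N] x = x) (hN0 : 0 < N)
    (y : G.F) (hy : y ∈ G.vertexOf x) :
    ∃ j, j < 2 * N ∧ spine G x j = y := by
  have key : ∀ a b : G.F, (fun x y => y = G.t1 x ∨ y = G.t2 x) a b →
      ((∃ j, spine G x j = a) ↔ (∃ j, spine G x j = b)) := by
    have closed : ∀ c : G.F, (∃ j, spine G x j = c) →
        (∃ j, spine G x j = G.t1 c) ∧ (∃ j, spine G x j = G.t2 c) := by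
      rintro c ⟨j, rfl⟩
      constructor
      · rcases Nat.even_or_odd j with ⟨k, hk⟩ | ⟨k, hk⟩
        · have hj : j = 2 * k := by omega
          refine ⟨2 * k + 1, ?_⟩
          rw [hj]
          exact spine_succ_even x k
        · have hj : j = 2 * k + 1 := by omega
          refine ⟨2 * k, ?_⟩
          rw [hj, spine_succ_even x k, G.t1_invol]
      · rcases Nat.even_or_odd j with ⟨k, hk⟩ | ⟨k, hk⟩
        · have hj : j = 2 * k := by omega
          subst hj
          rcases Nat.eq_zero_or_pos k with hk0 | hk0
          · subst hk0
            refine ⟨2 * N - 1, ?_⟩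
            have h1 : 2 * N - 1 = 2 * (N - 1) + 1 := by omega
            have h2 : (sF G)^[N - 1] x = (sB G)^[1] x :=
              (sB_iter_eq_sF_iter hN (by omega)).symm
            rw [h1, spine_odd, h2]
            simp only [Function.iterate_one, sB, Function.comp_apply,
              G.t1_invol (G.t2 _), mul_zero, spine_zero]
          · refine ⟨2 * k - 1, ?_⟩
            have h1 : 2 * k - 1 = 2 * (k - 1) + 1 := by omega
            have h2 : k = (k - 1) + 1 := by omega
            rw [h1, spine_odd, spine_even, h2, Function.iterate_succ_apply']
            show G.t1 ((sF G)^[k-1] x) = G.t2 (G.t2 (G.t1 ((sF G)^[k-1] x)))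
            rw [G.t2_invol]
        · have hj : j = 2 * k + 1 := by omega
          refine ⟨2 * k + 2, ?_⟩
          rw [hj]
          exact spine_succ_odd x k
    rintro a b (rfl | rfl)
    · constructor
      · exact fun h => (closed a h).1
      · intro h
        have := (closed _ h).1
        rwa [G.t1_invol] at this
    · constructor
      · exact fun h => (closed a h).2
      · intro h
        have := (closed _ h).2
        rwa [G.t2_invol] at this
  have iff_all : ∀ a b : G.F, G.vertexRel a b →
      ((∃ j, spine G x j = a) ↔ (∃ j, spine G x j = b)) := by
    intro a b h
    induction h with
    | rel a b hab => exact key a b hab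
    | refl a => exact Iff.rfl
    | symm a b _ ih => exact ih.symm
    | trans a b c _ _ ih1 ih2 => exact ih1.trans ih2
  obtain ⟨j, hj⟩ := (iff_all x y hy).mp ⟨0, spine_zero x⟩
  refine ⟨j % (2 * N), Nat.mod_lt _ (by omega), ?_⟩
  rw [← spine_mod hN hN0, hj]

end Period

end Spine

end RibbonGraph

namespace RibbonGraph

open Relation

section SpineRev

variable {G : RibbonGraph}

lemma sF_iter_t1 (k : ℕ) (x : G.F) :
    (sF G)^[k] (G.t1 x) = G.t1 ((sB G)^[k] x) := by
  induction k with
  | zero => rfl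
  | succ n ih =>
      rw [Function.iterate_succ_apply', ih, Function.iterate_succ_apply']
      show sF G (G.t1 ((sB G)^[n] x)) = G.t1 (sB G ((sB G)^[n] x))
      simp only [sF, sB, Function.comp_apply, G.t1_invol ((sB G)^[n] x),
        G.t1_invol (G.t2 ((sB G)^[n] x))]

lemma sF_iter_t2 (k : ℕ) (x : G.F) :
    (sF G)^[k] (G.t2 x) = G.t2 ((sB G)^[k] x) := by
  induction k with
  | zero => rfl
  | succ n ih =>
      rw [Function.iterate_succ_apply', ih, Function.iterate_succ_apply']
      rfl

variable {x : G.F} {N : ℕ}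

lemma spine_t1_rev (hN : (sF G)^[N] x = x) (hN0 : 0 < N) {m : ℕ}
    (hm : m ≤ 2 * N + 1) :
    spine G (G.t1 x) m = spine G x (2 * N + 1 - m) := by
  rcases Nat.even_or_odd m with ⟨k, hk⟩ | ⟨k, hk⟩
  · have hm' : m = 2 * k := by omega
    have hkN : k ≤ N := by omega
    rw [hm']
    rw [show 2 * N + 1 - 2 * k = 2 * (N - k) + 1 by omega, spine_even,
      spine_odd, sF_iter_t1, sB_iter_eq_sF_iter hN hkN]
  · have hm' : m = 2 * k + 1 := by omega
    have hkN : k ≤ N := by omega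
    rw [hm']
    rw [show 2 * N + 1 - (2 * k + 1) = 2 * (N - k) by omega, spine_odd,
      spine_even, sF_iter_t1, G.t1_invol, sB_iter_eq_sF_iter hN hkN]

lemma spine_t2_rev (hN : (sF G)^[N] x = x) (hN0 : 0 < N) {m : ℕ}
    (hm : m ≤ 2 * N - 1) :
    spine G (G.t2 x) m = spine G x (2 * N - 1 - m) := by
  rcases Nat.even_or_odd m with ⟨k, hk⟩ | ⟨k, hk⟩
  · have hm' : m = 2 * k := by omega
    have hkN : k + 1 ≤ N := by omega
    rw [hm']
    rw [show 2 * N - 1 - 2 * k = 2 * (N - (k + 1)) + 1 by omega, spine_even,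
      spine_odd, sF_iter_t2,
      ← sB_iter_eq_sF_iter hN hkN, Function.iterate_succ_apply']
    show G.t2 ((sB G)^[k] x) = G.t1 (G.t1 (G.t2 ((sB G)^[k] x)))
    rw [G.t1_invol]
  · have hm' : m = 2 * k + 1 := by omega
    have hkN : k + 1 ≤ N := by omega
    rw [hm']
    rw [show 2 * N - 1 - (2 * k + 1) = 2 * (N - (k + 1)) by omega, spine_odd,
      spine_even, sF_iter_t2,
      ← sB_iter_eq_sF_iter hN hkN, Function.iterate_succ_apply']
    rfl

lemma spine_shift (a m : ℕ) :
    spine G x (2 * a + m) = spine G ((sF G)^[a] x) m := by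
  rcases Nat.even_or_odd m with ⟨b, hb⟩ | ⟨b, hb⟩
  · have hm' : m = 2 * b := by omega
    rw [hm']
    rw [show 2 * a + 2 * b = 2 * (b + a) by omega, spine_even, spine_even,
      Function.iterate_add_apply]
  · have hm' : m = 2 * b + 1 := by omega
    rw [hm']
    rw [show 2 * a + (2 * b + 1) = 2 * (b + a) + 1 by omega, spine_odd,
      spine_odd, Function.iterate_add_apply]

lemma vertexRel_imp_compRel {a b : G.F} (h : G.vertexRel a b) : G.compRel a b := by
  refine Relation.EqvGen.mono ?_ _ _ h
  rintro u w (hw | hw)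
  · exact Or.inr (Or.inl hw)
  · exact Or.inr (Or.inr hw)

end SpineRev

section Induced

variable {G H : RibbonGraph} {A : Set (Set G.F)} {φ : H.F → G.F}

lemma mem_A_phi (hrange : Set.range φ = {x : G.F | G.edgeOf x ∈ A}) (z : H.F) :
    G.edgeOf (φ z) ∈ A := by
  have : φ z ∈ Set.range φ := ⟨z, rfl⟩
  rwa [hrange] at this

lemma invFun_phi [Nonempty H.F] (hinj : Function.Injective φ) (z : H.F) :
    Function.invFun φ (φ z) = z :=
  Function.leftInverse_invFun hinj z

lemma phi_invFun [Nonempty H.F] (hrange : Set.range φ = {x : G.F | G.edgeOf x ∈ A})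
    {x : G.F} (hx : G.edgeOf x ∈ A) : φ (Function.invFun φ x) = x := by
  apply Function.invFun_eq
  have : x ∈ Set.range φ := by rw [hrange]; exact hx
  exact this

lemma invFun_t0 [Nonempty H.F] (hinj : Function.Injective φ)
    (hrange : Set.range φ = {x : G.F | G.edgeOf x ∈ A})
    (hc0 : ∀ z, φ (H.t0 z) = G.t0 (φ z))
    {x : G.F} (hx : G.edgeOf x ∈ A) :
    Function.invFun φ (G.t0 x) = H.t0 (Function.invFun φ x) := by
  apply hinj
  rw [phi_invFun hrange (by rwa [G.edgeOf_t0]), hc0, phi_invFun hrange hx]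

lemma invFun_t2 [Nonempty H.F] (hinj : Function.Injective φ)
    (hrange : Set.range φ = {x : G.F | G.edgeOf x ∈ A})
    (hc2 : ∀ z, φ (H.t2 z) = G.t2 (φ z))
    {x : G.F} (hx : G.edgeOf x ∈ A) :
    Function.invFun φ (G.t2 x) = H.t2 (Function.invFun φ x) := by
  apply hinj
  rw [phi_invFun hrange (by rwa [G.edgeOf_t2]), hc2, phi_invFun hrange hx]

/-- The skip condition of `IsInducedVia`, in spine form: the first flag of an
edge of `A` strictly after `φ z` on the spine of `φ z` is `φ (H.t1 z)`, at an
odd position. -/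
lemma spine_next (hrange : Set.range φ = {x : G.F | G.edgeOf x ∈ A})
    (hc1 : ∀ z, ∃ k : ℕ,
      φ (H.t1 z) = G.t1 ((G.t2 ∘ G.t1)^[k] (φ z)) ∧
      ∀ j < k, G.edgeOf (G.t1 ((G.t2 ∘ G.t1)^[j] (φ z))) ∉ A) (z : H.F) :
    ∃ k, spine G (φ z) (2 * k + 1) = φ (H.t1 z) ∧
      ∀ m, 1 ≤ m → m < 2 * k + 1 → G.edgeOf (spine G (φ z) m) ∉ A := by
  obtain ⟨k, hk1, hk2⟩ := hc1 z
  refine ⟨k, ?_, ?_⟩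
  · rw [spine_odd, hk1]
  · intro m hm1 hm2
    rcases Nat.even_or_odd m with ⟨j, hj⟩ | ⟨j, hj⟩
    · have hm' : m = 2 * j := by omega
      have hj1 : 1 ≤ j := by omega
      have hmm : m = 2 * (j - 1) + 1 + 1 := by omega
      have : spine G (φ z) m = G.t2 (spine G (φ z) (2 * (j - 1) + 1)) := by
        rw [hmm]; exact spine_succ_odd _ _
      rw [this, G.edgeOf_t2, spine_odd]
      have : j - 1 < k := by omega
      exact hk2 (j - 1) this
    · have hm' : m = 2 * j + 1 := by omega
      rw [hm', spine_odd]
      exact hk2 j (by omega)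

lemma t1_step [Nonempty H.F] (hinj : Function.Injective φ)
    (hrange : Set.range φ = {x : G.F | G.edgeOf x ∈ A})
    (hc1 : ∀ z, ∃ k : ℕ,
      φ (H.t1 z) = G.t1 ((G.t2 ∘ G.t1)^[k] (φ z)) ∧
      ∀ j < k, G.edgeOf (G.t1 ((G.t2 ∘ G.t1)^[j] (φ z))) ∉ A)
    {z : H.F} (h : G.edgeOf (G.t1 (φ z)) ∈ A) :
    φ (H.t1 z) = G.t1 (φ z) := by
  obtain ⟨k, hk1, hk2⟩ := spine_next hrange hc1 z
  rcases Nat.eq_zero_or_pos k with hk0 | hk0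
  · subst hk0
    rw [← hk1, spine_one]
  · exfalso
    exact hk2 1 le_rfl (by omega) (by rwa [spine_one])

lemma push_vertexRel (hrange : Set.range φ = {x : G.F | G.edgeOf x ∈ A})
    (hc2 : ∀ z, φ (H.t2 z) = G.t2 (φ z))
    (hc1 : ∀ z, ∃ k : ℕ,
      φ (H.t1 z) = G.t1 ((G.t2 ∘ G.t1)^[k] (φ z)) ∧
      ∀ j < k, G.edgeOf (G.t1 ((G.t2 ∘ G.t1)^[j] (φ z))) ∉ A)
    {z z' : H.F} (h : H.vertexRel z z') : G.vertexRel (φ z) (φ z') := by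
  induction h with
  | rel a b hab =>
      rcases hab with hb | hb
      · obtain ⟨k, hk1, _⟩ := spine_next hrange hc1 a
        rw [hb, ← hk1]
        exact spine_mem_vertexOf (φ a) (2 * k + 1)
      · rw [hb, hc2]
        exact vertexRel_t2 (φ a)
  | refl a => exact vertexRel_refl _
  | symm a b _ ih => exact vertexRel_symm ih
  | trans a b c _ _ ih1 ih2 => exact vertexRel_trans ih1 ih2

lemma push_compRel (hrange : Set.range φ = {x : G.F | G.edgeOf x ∈ A})
    (hc0 : ∀ z, φ (H.t0 z) = G.t0 (φ z))
    (hc2 : ∀ z, φ (H.t2 z) = G.t2 (φ z))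
    (hc1 : ∀ z, ∃ k : ℕ,
      φ (H.t1 z) = G.t1 ((G.t2 ∘ G.t1)^[k] (φ z)) ∧
      ∀ j < k, G.edgeOf (G.t1 ((G.t2 ∘ G.t1)^[j] (φ z))) ∉ A)
    {z z' : H.F} (h : H.compRel z z') : G.compRel (φ z) (φ z') := by
  induction h with
  | rel a b hab =>
      rcases hab with hb | hb | hb
      · rw [hb, hc0]
        exact EqvGen.rel _ _ (Or.inl rfl)
      · obtain ⟨k, hk1, _⟩ := spine_next hrange hc1 a
        rw [hb, ← hk1]
        exact vertexRel_imp_compRel (spine_mem_vertexOf (φ a) (2 * k + 1))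
      · rw [hb, hc2]
        exact EqvGen.rel _ _ (Or.inr (Or.inr rfl))
  | refl a => exact EqvGen.refl _
  | symm a b _ ih => exact EqvGen.symm _ _ ih
  | trans a b c _ _ ih1 ih2 => exact EqvGen.trans _ _ _ ih1 ih2

/-- Two flags of edges of `A` on the same vertex of `G` are on the same vertex
of the induced ribbon subgraph. -/
lemma transfer_vertexRel [Nonempty H.F] (hinj : Function.Injective φ)
    (hrange : Set.range φ = {x : G.F | G.edgeOf x ∈ A})
    (hc2 : ∀ z, φ (H.t2 z) = G.t2 (φ z))
    (hc1 : ∀ z, ∃ k : ℕ,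
      φ (H.t1 z) = G.t1 ((G.t2 ∘ G.t1)^[k] (φ z)) ∧
      ∀ j < k, G.edgeOf (G.t1 ((G.t2 ∘ G.t1)^[j] (φ z))) ∉ A)
    {a b : G.F} (ha : G.edgeOf a ∈ A) (hb : G.edgeOf b ∈ A)
    (h : G.vertexRel a b) :
    H.vertexRel (Function.invFun φ a) (Function.invFun φ b) := by
  classical
  obtain ⟨N, hN0, hN⟩ := exists_sF_period a
  obtain ⟨j, hj2N, hjb⟩ := vertexOf_subset_spine hN hN0 b h
  have key : ∀ j, G.edgeOf (spine G a j) ∈ A →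
      H.vertexRel (Function.invFun φ a) (Function.invFun φ (spine G a j)) := by
    intro j
    induction j using Nat.strong_induction_on with
    | _ j ih =>
      intro hjA
      rcases Nat.eq_zero_or_pos j with rfl | hj0
      · rw [spine_zero]
        exact vertexRel_refl _
      set P' : ℕ → Prop := fun i => G.edgeOf (spine G a i) ∈ A with hP'
      set i := Nat.findGreatest P' (j - 1) with hi
      have hP'i : P' i := by
        apply Nat.findGreatest_spec (m := 0) (by omega)
        show G.edgeOf (spine G a 0) ∈ A
        rwa [spine_zero]
      have hij : i ≤ j - 1 := Nat.findGreatest_le (j - 1)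
      have hgreat : ∀ m, i < m → m ≤ j - 1 → G.edgeOf (spine G a m) ∉ A := by
        intro m h1 h2
        exact Nat.findGreatest_is_greatest h1 h2
      have IH : H.vertexRel (Function.invFun φ a)
          (Function.invFun φ (spine G a i)) := ih i (by omega) hP'i
      set z := Function.invFun φ (spine G a i) with hz
      have hφz : φ z = spine G a i := phi_invFun hrange hP'i
      refine vertexRel_trans IH ?_
      rcases Nat.lt_or_ge (i + 1) j with hgap | hgap
      · -- gap ≥ 2 : use the skip condition
        have hieven : i % 2 = 0 := by
          by_contra hodd
          have h1 : spine G a (i + 1) = G.t2 (spine G a i) := by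
            rw [spine_succ, if_neg hodd]
          apply hgreat (i + 1) (by omega) (by omega)
          rw [h1, G.edgeOf_t2]
          exact hP'i
        obtain ⟨a', ha'⟩ : ∃ a', i = 2 * a' := ⟨i / 2, by omega⟩
        have h0 : φ z = (sF G)^[a'] a := by rw [hφz, ha', spine_even]
        have hshift : ∀ m, spine G (φ z) m = spine G a (i + m) := by
          intro m
          rw [h0, ← spine_shift, ha']
        obtain ⟨k, hk1, hk2⟩ := spine_next hrange hc1 z
        have hg1 : 1 ≤ j - i := by omega
        have hcase : 2 * k + 1 = j - i := by
          rcases lt_trichotomy (2 * k + 1) (j - i) with hlt | he | hgt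
          · exfalso
            apply hgreat (i + (2 * k + 1)) (by omega) (by omega)
            rw [← hshift (2 * k + 1), hk1]
            exact mem_A_phi hrange _
          · exact he
          · exfalso
            apply hk2 (j - i) hg1 hgt
            rw [hshift (j - i), show i + (j - i) = j by omega]
            exact hjA
        have hfin : spine G a j = φ (H.t1 z) := by
          rw [← hk1, hcase, hshift (j - i), show i + (j - i) = j by omega]
        rw [hfin, invFun_phi hinj]
        exact EqvGen.rel _ _ (Or.inl rfl)
      · -- gap = 1
        have hj1 : j = i + 1 := by omega
        rw [hj1] at hjA ⊢
        rcases Nat.even_or_odd i with ⟨k, hk⟩ | ⟨k, hk⟩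
        · have hieven : i % 2 = 0 := by omega
          have h1 : spine G a (i + 1) = G.t1 (spine G a i) := by
            rw [spine_succ, if_pos hieven]
          have h2 : φ (H.t1 z) = G.t1 (φ z) := by
            apply t1_step hinj hrange hc1
            rw [hφz, ← h1]
            exact hjA
          have hfin : spine G a (i + 1) = φ (H.t1 z) := by
            rw [h2, hφz, h1]
          rw [hfin, invFun_phi hinj]
          exact EqvGen.rel _ _ (Or.inl rfl)
        · have hiodd : ¬ i % 2 = 0 := by omega
          have h1 : spine G a (i + 1) = G.t2 (spine G a i) := by
            rw [spine_succ, if_neg hiodd]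
          rw [h1, invFun_t2 hinj hrange hc2 hP'i]
          exact EqvGen.rel _ _ (Or.inr rfl)
  rw [← hjb] at hb ⊢
  exact key j hb

end Induced

end RibbonGraph

namespace RibbonGraph

open Relation

section PdualBasics

variable {G : RibbonGraph}

open Classical in
lemma pdual_t0_def (A : Set (Set G.F)) (x : G.F) :
    (G.pdual A).t0 x = if G.edgeOf x ∈ A then G.t2 x else G.t0 x := rfl

open Classical in
lemma pdual_t2_def (A : Set (Set G.F)) (x : G.F) :
    (G.pdual A).t2 x = if G.edgeOf x ∈ A then G.t0 x else G.t2 x := rfl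

lemma pdual_t1_def (A : Set (Set G.F)) : (G.pdual A).t1 = G.t1 := rfl

lemma pdual_t2_of_not_mem {A : Set (Set G.F)} {x : G.F}
    (h : G.edgeOf x ∉ A) : (G.pdual A).t2 x = G.t2 x := by
  rw [pdual_t2_def, if_neg h]

lemma pdual_t2_of_mem {A : Set (Set G.F)} {x : G.F}
    (h : G.edgeOf x ∈ A) : (G.pdual A).t2 x = G.t0 x := by
  rw [pdual_t2_def, if_pos h]

lemma pdual_t0_of_not_mem {A : Set (Set G.F)} {x : G.F}
    (h : G.edgeOf x ∉ A) : (G.pdual A).t0 x = G.t0 x := by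
  rw [pdual_t0_def, if_neg h]

lemma pdual_t0_of_mem {A : Set (Set G.F)} {x : G.F}
    (h : G.edgeOf x ∈ A) : (G.pdual A).t0 x = G.t2 x := by
  rw [pdual_t0_def, if_pos h]

/-- On a vertex none of whose flags belong to an edge of `A`, the vertex
classes of `G` and of `G^A` agree. -/
lemma vertexOf_pdual_of_allNot {A : Set (Set G.F)} {x : G.F}
    (hall : ∀ y ∈ G.vertexOf x, G.edgeOf y ∉ A) :
    (G.pdual A).vertexOf x = G.vertexOf x := by
  have claim1 : ∀ a b : G.F, G.vertexRel a b →
      ((a ∈ G.vertexOf x ↔ b ∈ G.vertexOf x) ∧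
        (a ∈ G.vertexOf x → (G.pdual A).vertexRel a b)) := by
    intro a b h
    induction h with
    | rel a b hab =>
        constructor
        · constructor
          · intro haS
            rcases hab with rfl | rfl
            · exact t1_mem_of_mem haS
            · exact t2_mem_of_mem haS
          · intro hbS
            rcases hab with rfl | rfl
            · have := t1_mem_of_mem hbS
              rwa [G.t1_invol] at this
            · have := t2_mem_of_mem hbS
              rwa [G.t2_invol] at this
        · intro haS
          rcases hab with rfl | rfl
          · exact EqvGen.rel _ _ (Or.inl rfl)
          · refine EqvGen.rel _ _ (Or.inr ?_)
            rw [pdual_t2_of_not_mem (hall a haS)]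
    | refl a => exact ⟨Iff.rfl, fun _ => EqvGen.refl a⟩
    | symm a b _ ih =>
        exact ⟨ih.1.symm, fun hb => EqvGen.symm _ _ (ih.2 (ih.1.mpr hb))⟩
    | trans a b c _ _ ih1 ih2 =>
        exact ⟨ih1.1.trans ih2.1,
          fun ha => EqvGen.trans _ _ _ (ih1.2 ha) (ih2.2 (ih1.1.mp ha))⟩
  have claim2 : ∀ a b : G.F, (G.pdual A).vertexRel a b →
      ((a ∈ G.vertexOf x ↔ b ∈ G.vertexOf x) ∧
        (a ∈ G.vertexOf x → G.vertexRel a b)) := by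
    have hstep : ∀ c ∈ G.vertexOf x, (G.pdual A).t1 c ∈ G.vertexOf x ∧
        (G.pdual A).t2 c ∈ G.vertexOf x := by
      intro c hc
      constructor
      · rw [pdual_t1_def]
        exact t1_mem_of_mem hc
      · rw [pdual_t2_of_not_mem (hall c hc)]
        exact t2_mem_of_mem hc
    intro a b h
    induction h with
    | rel a b hab =>
        constructor
        · constructor
          · intro haS
            rcases hab with hb | hb
            · rw [hb]; exact (hstep a haS).1
            · rw [hb]; exact (hstep a haS).2
          · intro hbS
            have ha1 : a = (G.pdual A).t1 b ∨ a = (G.pdual A).t2 b := by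
              rcases hab with hb | hb
              · left; rw [hb]; exact ((G.pdual A).t1_invol a).symm
              · right; rw [hb]; exact ((G.pdual A).t2_invol a).symm
            rcases ha1 with ha | ha
            · rw [ha]; exact (hstep b hbS).1
            · rw [ha]; exact (hstep b hbS).2
        · intro haS
          rcases hab with hb | hb
          · rw [hb, pdual_t1_def]
            exact vertexRel_t1 a
          · rw [hb, pdual_t2_of_not_mem (hall a haS)]
            exact vertexRel_t2 a
    | refl a => exact ⟨Iff.rfl, fun _ => EqvGen.refl a⟩
    | symm a b _ ih =>
        exact ⟨ih.1.symm, fun hb => EqvGen.symm _ _ (ih.2 (ih.1.mpr hb))⟩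
    | trans a b c _ _ ih1 ih2 =>
        exact ⟨ih1.1.trans ih2.1,
          fun ha => EqvGen.trans _ _ _ (ih1.2 ha) (ih2.2 (ih1.1.mp ha))⟩
  ext y
  constructor
  · intro hy
    exact (claim2 x y hy).2 (mem_vertexOf_self x)
  · intro hy
    exact (claim1 x y hy).2 (mem_vertexOf_self x)

lemma numComponents_pdual (A : Set (Set G.F)) :
    (G.pdual A).numComponents = G.numComponents := by
  apply card_quot_congr (α := G.F)
  intro x y
  show (y = (G.pdual A).t0 x ∨ y = (G.pdual A).t1 x ∨ y = (G.pdual A).t2 x) ↔ _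
  rw [pdual_t0_def, pdual_t1_def, pdual_t2_def]
  by_cases h : G.edgeOf x ∈ A
  · rw [if_pos h, if_pos h]; tauto
  · rw [if_neg h, if_neg h]

lemma numEdges_pdual (A : Set (Set G.F)) :
    (G.pdual A).numEdges = G.numEdges := by
  apply card_quot_congr (α := G.F)
  intro x y
  show (y = (G.pdual A).t0 x ∨ y = (G.pdual A).t2 x) ↔ _
  rw [pdual_t0_def, pdual_t2_def]
  by_cases h : G.edgeOf x ∈ A
  · rw [if_pos h, if_pos h]; tauto
  · rw [if_neg h, if_neg h]

end PdualBasics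

section Counting

variable {G P Q : RibbonGraph} {Bp Bq : Set (Set G.F)}
  {φP : P.F → G.F} {φQ : Q.F → G.F} {v : Set G.F}

lemma edge_mem_or (hcover : Bp ∪ Bq = G.edgeSet) (x : G.F) :
    G.edgeOf x ∈ Bp ∨ G.edgeOf x ∈ Bq := by
  have h := edgeOf_mem_edgeSet x
  rw [← hcover] at h
  exact h

lemma numFaces_pdual_eq (hdisj : Disjoint Bp Bq) (hcover : Bp ∪ Bq = G.edgeSet) :
    (G.pdual Bq).numFaces = (G.pdual Bp).numVertices := by
  apply card_quot_congr (α := G.F)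
  intro x y
  show (y = (G.pdual Bq).t0 x ∨ y = (G.pdual Bq).t1 x) ↔
    (y = (G.pdual Bp).t1 x ∨ y = (G.pdual Bp).t2 x)
  rw [pdual_t0_def, pdual_t1_def, pdual_t1_def, pdual_t2_def]
  by_cases h : G.edgeOf x ∈ Bq
  · have h' : G.edgeOf x ∉ Bp := Set.disjoint_right.mp hdisj h
    rw [if_pos h, if_neg h']
    tauto
  · have h' : G.edgeOf x ∈ Bp := (edge_mem_or hcover x).resolve_right h
    rw [if_neg h, if_pos h']
    tauto

/-- The vertex whose flags meet both `Bp` and `Bq` is `v`. -/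
lemma vertexOf_eq_v_of_mixed
    (hv : G.verticesIn Bp ∩ G.verticesIn Bq = {v})
    {x y : G.F} (hxy : y ∈ G.vertexOf x)
    (hx : G.edgeOf x ∈ Bp) (hy : G.edgeOf y ∈ Bq) : G.vertexOf x = v := by
  have h1 : G.vertexOf x ∈ G.verticesIn Bp :=
    ⟨vertexOf_mem_vertices x, x, mem_vertexOf_self x, hx⟩
  have h2 : G.vertexOf x ∈ G.verticesIn Bq :=
    ⟨vertexOf_mem_vertices x, y, hxy, hy⟩
  have h3 : G.vertexOf x ∈ G.verticesIn Bp ∩ G.verticesIn Bq := ⟨h1, h2⟩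
  rwa [hv] at h3

/-- The number of vertices of an induced ribbon subgraph is the number of
vertices of `G` incident to its edges. -/
lemma numVertices_induced {H : RibbonGraph} {A : Set (Set G.F)} {φ : H.F → G.F}
    [Nonempty H.F] (hinj : Function.Injective φ)
    (hrange : Set.range φ = {x : G.F | G.edgeOf x ∈ A})
    (hc2 : ∀ z, φ (H.t2 z) = G.t2 (φ z))
    (hc1 : ∀ z, ∃ k : ℕ,
      φ (H.t1 z) = G.t1 ((G.t2 ∘ G.t1)^[k] (φ z)) ∧
      ∀ j < k, G.edgeOf (G.t1 ((G.t2 ∘ G.t1)^[j] (φ z))) ∉ A) :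
    H.numVertices = (G.verticesIn A).ncard := by
  classical
  rw [← Nat.card_coe_set_eq]
  apply Nat.card_congr
  show Quot (fun x y : H.F => y = H.t1 x ∨ y = H.t2 x) ≃ ↥(G.verticesIn A)
  have wd : ∀ (z z' : H.F), (z' = H.t1 z ∨ z' = H.t2 z) →
      (⟨G.vertexOf (φ z), vertexOf_mem_vertices _, φ z, mem_vertexOf_self _,
        mem_A_phi hrange z⟩ : ↥(G.verticesIn A)) =
      ⟨G.vertexOf (φ z'), vertexOf_mem_vertices _, φ z', mem_vertexOf_self _,
        mem_A_phi hrange z'⟩ := by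
    intro z z' hzz
    apply Subtype.ext
    exact vertexOf_eq_of_rel
      (push_vertexRel hrange hc2 hc1 (EqvGen.rel _ _ hzz))
  refine ⟨Quot.lift _ wd, fun w => Quot.mk _
    (Function.invFun φ (Classical.choose w.2.2)), ?_, ?_⟩
  · intro q
    induction q using Quot.ind with
    | _ z =>
      have hspec := Classical.choose_spec
        (⟨G.vertexOf (φ z), vertexOf_mem_vertices _, φ z, mem_vertexOf_self _,
          mem_A_phi hrange z⟩ : ↥(G.verticesIn A)).2.2
      obtain ⟨hmem, hedge⟩ := hspec
      have hrel : H.vertexRel (Function.invFun φ (φ z))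
          (Function.invFun φ _) :=
        transfer_vertexRel hinj hrange hc2 hc1 (mem_A_phi hrange z) hedge hmem
      rw [invFun_phi hinj] at hrel
      exact (Quot.eqvGen_sound (EqvGen.symm _ _ hrel))
  · rintro ⟨w, hw1, hw2⟩
    have hspec := Classical.choose_spec
      (⟨w, hw1, hw2⟩ : ↥(G.verticesIn A)).2.2
    obtain ⟨hmem, hedge⟩ := hspec
    apply Subtype.ext
    show G.vertexOf (φ (Function.invFun φ _)) = w
    rw [phi_invFun hrange hedge]
    exact (eq_vertexOf_of_mem hw1 hmem).symm

end Counting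

end RibbonGraph

namespace RibbonGraph

open Relation

/-- Generator relation for vertices. -/
def vGen (G : RibbonGraph) : G.F → G.F → Prop := fun x y => y = G.t1 x ∨ y = G.t2 x
/-- Generator relation for edges. -/
def eGen (G : RibbonGraph) : G.F → G.F → Prop := fun x y => y = G.t0 x ∨ y = G.t2 x
/-- Generator relation for faces. -/
def fGen (G : RibbonGraph) : G.F → G.F → Prop := fun x y => y = G.t0 x ∨ y = G.t1 x
/-- Generator relation for components. -/
def cGen (G : RibbonGraph) : G.F → G.F → Prop :=
  fun x y => y = G.t0 x ∨ y = G.t1 x ∨ y = G.t2 x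

lemma numVertices_eq (G : RibbonGraph) : G.numVertices = Nat.card (Quot (vGen G)) := rfl
lemma numEdges_eq (G : RibbonGraph) : G.numEdges = Nat.card (Quot (eGen G)) := rfl
lemma numFaces_eq (G : RibbonGraph) : G.numFaces = Nat.card (Quot (fGen G)) := rfl
lemma numComponents_eq (G : RibbonGraph) :
    G.numComponents = Nat.card (Quot (cGen G)) := rfl
lemma vertexRel_eq (G : RibbonGraph) : G.vertexRel = EqvGen (vGen G) := rfl
lemma compRel_eq (G : RibbonGraph) : G.compRel = EqvGen (cGen G) := rfl

lemma cGen_t0 (G : RibbonGraph) (x : G.F) : cGen G x (G.t0 x) := Or.inl rfl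
lemma cGen_t2 (G : RibbonGraph) (x : G.F) : cGen G x (G.t2 x) :=
  Or.inr (Or.inr rfl)

section Splits

variable {G P Q : RibbonGraph} {Bp Bq : Set (Set G.F)}
  {φP : P.F → G.F} {φQ : Q.F → G.F} {v : Set G.F}

lemma numEdges_split [Nonempty P.F] [Nonempty Q.F]
    (hinjP : Function.Injective φP)
    (hrangeP : Set.range φP = {x : G.F | G.edgeOf x ∈ Bp})
    (hc0P : ∀ z, φP (P.t0 z) = G.t0 (φP z))
    (hc2P : ∀ z, φP (P.t2 z) = G.t2 (φP z))
    (hinjQ : Function.Injective φQ)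
    (hrangeQ : Set.range φQ = {x : G.F | G.edgeOf x ∈ Bq})
    (hc0Q : ∀ z, φQ (Q.t0 z) = G.t0 (φQ z))
    (hc2Q : ∀ z, φQ (Q.t2 z) = G.t2 (φQ z))
    (hdisj : Disjoint Bp Bq) (hcover : Bp ∪ Bq = G.edgeSet) :
    G.numEdges = P.numEdges + Q.numEdges := by
  classical
  haveI := G.fintype; haveI := P.fintype; haveI := Q.fintype
  rw [numEdges_eq, numEdges_eq, numEdges_eq, ← Nat.card_sum]
  apply Nat.card_congr
  have hwd : ∀ x y : G.F, eGen G x y →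
      (if G.edgeOf x ∈ Bq then (Sum.inr (Quot.mk (eGen Q) (Function.invFun φQ x))
          : Quot (eGen P) ⊕ Quot (eGen Q))
        else Sum.inl (Quot.mk (eGen P) (Function.invFun φP x))) =
      (if G.edgeOf y ∈ Bq then Sum.inr (Quot.mk (eGen Q) (Function.invFun φQ y))
        else Sum.inl (Quot.mk (eGen P) (Function.invFun φP y))) := by
    intro x y hxy
    have hedge : G.edgeOf y = G.edgeOf x := by
      rcases hxy with rfl | rfl
      · exact G.edgeOf_t0 x
      · exact G.edgeOf_t2 x
    by_cases hq : G.edgeOf x ∈ Bq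
    · have hq' : G.edgeOf y ∈ Bq := by rw [hedge]; exact hq
      rw [if_pos hq, if_pos hq']
      have : Quot.mk (eGen Q) (Function.invFun φQ x) =
          Quot.mk (eGen Q) (Function.invFun φQ y) := by
        rcases hxy with rfl | rfl
        · rw [invFun_t0 hinjQ hrangeQ hc0Q hq]
          exact Quot.sound (Or.inl rfl)
        · rw [invFun_t2 hinjQ hrangeQ hc2Q hq]
          exact Quot.sound (Or.inr rfl)
      rw [this]
    · have hp : G.edgeOf x ∈ Bp := (edge_mem_or hcover x).resolve_right hq
      have hq' : G.edgeOf y ∉ Bq := by rw [hedge]; exact hq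
      rw [if_neg hq, if_neg hq']
      have : Quot.mk (eGen P) (Function.invFun φP x) =
          Quot.mk (eGen P) (Function.invFun φP y) := by
        rcases hxy with rfl | rfl
        · rw [invFun_t0 hinjP hrangeP hc0P hp]
          exact Quot.sound (Or.inl rfl)
        · rw [invFun_t2 hinjP hrangeP hc2P hp]
          exact Quot.sound (Or.inr rfl)
      rw [this]
  have hwdP : ∀ z z' : P.F, eGen P z z' →
      Quot.mk (eGen G) (φP z) = Quot.mk (eGen G) (φP z') := by
    intro z z' hzz
    rcases hzz with rfl | rfl
    · rw [hc0P]; exact Quot.sound (Or.inl rfl)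
    · rw [hc2P]; exact Quot.sound (Or.inr rfl)
  have hwdQ : ∀ z z' : Q.F, eGen Q z z' →
      Quot.mk (eGen G) (φQ z) = Quot.mk (eGen G) (φQ z') := by
    intro z z' hzz
    rcases hzz with rfl | rfl
    · rw [hc0Q]; exact Quot.sound (Or.inl rfl)
    · rw [hc2Q]; exact Quot.sound (Or.inr rfl)
  refine ⟨Quot.lift _ hwd,
    Sum.elim (Quot.lift (fun z => Quot.mk (eGen G) (φP z)) hwdP)
      (Quot.lift (fun z => Quot.mk (eGen G) (φQ z)) hwdQ), ?_, ?_⟩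
  · intro q
    induction q using Quot.ind with
    | _ x =>
      show Sum.elim _ _ (if G.edgeOf x ∈ Bq then _ else _) = _
      by_cases hq : G.edgeOf x ∈ Bq
      · rw [if_pos hq]
        show Quot.mk (eGen G) (φQ (Function.invFun φQ x)) = Quot.mk (eGen G) x
        rw [phi_invFun hrangeQ hq]
      · have hp : G.edgeOf x ∈ Bp := (edge_mem_or hcover x).resolve_right hq
        rw [if_neg hq]
        show Quot.mk (eGen G) (φP (Function.invFun φP x)) = Quot.mk (eGen G) x
        rw [phi_invFun hrangeP hp]
  · intro t
    rcases t with q | q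
    · induction q using Quot.ind with
      | _ z =>
        show (if G.edgeOf (φP z) ∈ Bq then _ else _) = _
        have hp : G.edgeOf (φP z) ∈ Bp := mem_A_phi hrangeP z
        have hq : G.edgeOf (φP z) ∉ Bq := Set.disjoint_left.mp hdisj hp
        rw [if_neg hq, invFun_phi hinjP]
    · induction q using Quot.ind with
      | _ z =>
        show (if G.edgeOf (φQ z) ∈ Bq then _ else _) = _
        have hq : G.edgeOf (φQ z) ∈ Bq := mem_A_phi hrangeQ z
        rw [if_pos hq, invFun_phi hinjQ]


lemma numComponents_split [Nonempty P.F] [Nonempty Q.F]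
    (hinjP : Function.Injective φP)
    (hrangeP : Set.range φP = {x : G.F | G.edgeOf x ∈ Bp})
    (hc0P : ∀ z, φP (P.t0 z) = G.t0 (φP z))
    (hc2P : ∀ z, φP (P.t2 z) = G.t2 (φP z))
    (hc1P : ∀ z, ∃ k : ℕ,
      φP (P.t1 z) = G.t1 ((G.t2 ∘ G.t1)^[k] (φP z)) ∧
      ∀ j < k, G.edgeOf (G.t1 ((G.t2 ∘ G.t1)^[j] (φP z))) ∉ Bp)
    (hinjQ : Function.Injective φQ)
    (hrangeQ : Set.range φQ = {x : G.F | G.edgeOf x ∈ Bq})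
    (hc0Q : ∀ z, φQ (Q.t0 z) = G.t0 (φQ z))
    (hc2Q : ∀ z, φQ (Q.t2 z) = G.t2 (φQ z))
    (hc1Q : ∀ z, ∃ k : ℕ,
      φQ (Q.t1 z) = G.t1 ((G.t2 ∘ G.t1)^[k] (φQ z)) ∧
      ∀ j < k, G.edgeOf (G.t1 ((G.t2 ∘ G.t1)^[j] (φQ z))) ∉ Bq)
    (hdisj : Disjoint Bp Bq) (hcover : Bp ∪ Bq = G.edgeSet)
    (hv : G.verticesIn Bp ∩ G.verticesIn Bq = {v}) :
    G.numComponents + 1 = P.numComponents + Q.numComponents := by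
  classical
  haveI := G.fintype; haveI := P.fintype; haveI := Q.fintype
  have hvmem : v ∈ G.verticesIn Bp ∩ G.verticesIn Bq := by rw [hv]; rfl
  obtain ⟨hvert, xP, hxPv, hxPB⟩ := hvmem.1
  obtain ⟨-, xQ, hxQv, hxQB⟩ := hvmem.2
  have hrelv : ∀ a ∈ v, ∀ b ∈ v, G.vertexRel a b := by
    intro a ha b hb
    have hva := eq_vertexOf_of_mem hvert ha
    rw [hva] at hb
    exact hb
  set pP : Quot (cGen P) := Quot.mk _ (Function.invFun φP xP) with hpP
  set pQ : Quot (cGen Q) := Quot.mk _ (Function.invFun φQ xQ) with hpQ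
  -- the `Q`-component class of a flag of an edge of `Bq`
  set clQ : G.F → Quot (cGen Q) := fun x => Quot.mk _ (Function.invFun φQ x)
    with hclQ
  set clP : G.F → Quot (cGen P) := fun x => Quot.mk _ (Function.invFun φP x)
    with hclP
  have hQsame : ∀ {x y : G.F}, G.edgeOf x ∈ Bq → G.edgeOf y ∈ Bq →
      G.vertexRel x y → clQ x = clQ y := by
    intro x y hx hy h
    exact Quot.eqvGen_sound (vertexRel_imp_compRel
      (transfer_vertexRel hinjQ hrangeQ hc2Q hc1Q hx hy h))
  have hPsame : ∀ {x y : G.F}, G.edgeOf x ∈ Bp → G.edgeOf y ∈ Bp →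
      G.vertexRel x y → clP x = clP y := by
    intro x y hx hy h
    exact Quot.eqvGen_sound (vertexRel_imp_compRel
      (transfer_vertexRel hinjP hrangeP hc2P hc1P hx hy h))
  -- the classifying map
  set c : G.F → Quot (cGen P) ⊕ {q : Quot (cGen Q) // q ≠ pQ} := fun x =>
    if hq : G.edgeOf x ∈ Bq then
      (if h : clQ x = pQ then Sum.inl pP else Sum.inr ⟨clQ x, h⟩)
    else Sum.inl (clP x) with hcdef
  have hwd : ∀ x y : G.F, cGen G x y → c x = c y := by
    intro x y hxy
    rcases hxy with h0 | h1 | h2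
    · -- t0 step
      have hedge : G.edgeOf y = G.edgeOf x := by rw [h0]; exact G.edgeOf_t0 x
      by_cases hq : G.edgeOf x ∈ Bq
      · have hq' : G.edgeOf y ∈ Bq := by rw [hedge]; exact hq
        have hcl : clQ y = clQ x := by
          rw [h0, hclQ]
          show Quot.mk _ (Function.invFun φQ (G.t0 x)) = _
          rw [invFun_t0 hinjQ hrangeQ hc0Q hq]
          exact (Quot.sound (cGen_t0 Q _)).symm
        rw [hcdef]
        simp only [dif_pos hq, dif_pos hq', hcl]
      · have hp : G.edgeOf x ∈ Bp := (edge_mem_or hcover x).resolve_right hq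
        have hq' : G.edgeOf y ∉ Bq := by rw [hedge]; exact hq
        have hcl : clP y = clP x := by
          rw [h0, hclP]
          show Quot.mk _ (Function.invFun φP (G.t0 x)) = _
          rw [invFun_t0 hinjP hrangeP hc0P hp]
          exact (Quot.sound (cGen_t0 P _)).symm
        rw [hcdef]
        simp only [dif_neg hq, dif_neg hq', hcl]
    · -- t1 step
      subst h1
      by_cases hq : G.edgeOf x ∈ Bq <;>
        by_cases hq' : G.edgeOf (G.t1 x) ∈ Bq
      · have hcl : clQ (G.t1 x) = clQ x :=
          (hQsame hq hq' (vertexRel_t1 x)).symm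
        rw [hcdef]
        simp only [dif_pos hq, dif_pos hq', hcl]
      · -- x is a Bq-flag, t1 x a Bp-flag : mixed vertex, equal to v
        have hp' : G.edgeOf (G.t1 x) ∈ Bp :=
          (edge_mem_or hcover (G.t1 x)).resolve_right hq'
        have hveq : G.vertexOf (G.t1 x) = v := by
          apply vertexOf_eq_v_of_mixed hv (y := x) _ hp' hq
          have : G.t1 (G.t1 x) ∈ G.vertexOf (G.t1 x) :=
            t1_mem_of_mem (mem_vertexOf_self _)
          rwa [G.t1_invol] at this
        have hxv : x ∈ v := by
          rw [← hveq]
          have : G.t1 (G.t1 x) ∈ G.vertexOf (G.t1 x) :=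
            t1_mem_of_mem (mem_vertexOf_self _)
          rwa [G.t1_invol] at this
        have ht1v : G.t1 x ∈ v := by
          rw [← hveq]; exact mem_vertexOf_self _
        have hclx : clQ x = pQ := hQsame hq hxQB (hrelv x hxv xQ hxQv)
        have hclt1 : clP (G.t1 x) = pP :=
          hPsame hp' hxPB (hrelv (G.t1 x) ht1v xP hxPv)
        rw [hcdef]
        simp only [dif_pos hq, dif_neg hq', dif_pos hclx, hclt1]
      · -- x a Bp-flag, t1 x a Bq-flag
        have hp : G.edgeOf x ∈ Bp := (edge_mem_or hcover x).resolve_right hq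
        have hveq : G.vertexOf x = v :=
          vertexOf_eq_v_of_mixed hv (y := G.t1 x) (vertexRel_t1 x) hp hq'
        have hxv : x ∈ v := by rw [← hveq]; exact mem_vertexOf_self _
        have ht1v : G.t1 x ∈ v := by
          rw [← hveq]; exact t1_mem_of_mem (mem_vertexOf_self _)
        have hclx : clP x = pP := hPsame hp hxPB (hrelv x hxv xP hxPv)
        have hclt1 : clQ (G.t1 x) = pQ :=
          hQsame hq' hxQB (hrelv (G.t1 x) ht1v xQ hxQv)
        rw [hcdef]
        simp only [dif_neg hq, dif_pos hq', dif_pos hclt1, hclx]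
      · have hp : G.edgeOf x ∈ Bp := (edge_mem_or hcover x).resolve_right hq
        have hp' : G.edgeOf (G.t1 x) ∈ Bp :=
          (edge_mem_or hcover (G.t1 x)).resolve_right hq'
        have hcl : clP (G.t1 x) = clP x :=
          (hPsame hp hp' (vertexRel_t1 x)).symm
        rw [hcdef]
        simp only [dif_neg hq, dif_neg hq', hcl]
    · -- t2 step
      have hedge : G.edgeOf y = G.edgeOf x := by rw [h2]; exact G.edgeOf_t2 x
      by_cases hq : G.edgeOf x ∈ Bq
      · have hq' : G.edgeOf y ∈ Bq := by rw [hedge]; exact hq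
        have hcl : clQ y = clQ x := by
          rw [h2, hclQ]
          show Quot.mk _ (Function.invFun φQ (G.t2 x)) = _
          rw [invFun_t2 hinjQ hrangeQ hc2Q hq]
          exact (Quot.sound (cGen_t2 Q _)).symm
        rw [hcdef]
        simp only [dif_pos hq, dif_pos hq', hcl]
      · have hp : G.edgeOf x ∈ Bp := (edge_mem_or hcover x).resolve_right hq
        have hq' : G.edgeOf y ∉ Bq := by rw [hedge]; exact hq
        have hcl : clP y = clP x := by
          rw [h2, hclP]
          show Quot.mk _ (Function.invFun φP (G.t2 x)) = _
          rw [invFun_t2 hinjP hrangeP hc2P hp]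
          exact (Quot.sound (cGen_t2 P _)).symm
        rw [hcdef]
        simp only [dif_neg hq, dif_neg hq', hcl]
  have hwdP : ∀ z z' : P.F, cGen P z z' →
      Quot.mk (cGen G) (φP z) = Quot.mk (cGen G) (φP z') := fun z z' hzz =>
    Quot.eqvGen_sound (push_compRel hrangeP hc0P hc2P hc1P (EqvGen.rel _ _ hzz))
  have hwdQ : ∀ z z' : Q.F, cGen Q z z' →
      Quot.mk (cGen G) (φQ z) = Quot.mk (cGen G) (φQ z') := fun z z' hzz =>
    Quot.eqvGen_sound (push_compRel hrangeQ hc0Q hc2Q hc1Q (EqvGen.rel _ _ hzz))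
  have hequiv : Quot (cGen G) ≃ Quot (cGen P) ⊕ {q : Quot (cGen Q) // q ≠ pQ} := by
    refine ⟨Quot.lift c hwd,
      Sum.elim (Quot.lift (fun z => Quot.mk (cGen G) (φP z)) hwdP)
        (fun s => Quot.lift (fun z => Quot.mk (cGen G) (φQ z)) hwdQ s.1),
      ?_, ?_⟩
    · intro q
      induction q using Quot.ind with
      | _ x =>
        show Sum.elim _ _ (c x) = _
        by_cases hq : G.edgeOf x ∈ Bq
        · by_cases hcl : clQ x = pQ
          · have hc1 : c x = Sum.inl pP := by
              rw [hcdef]; simp only [dif_pos hq, dif_pos hcl]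
            rw [hc1]
            show Quot.mk (cGen G) (φP (Function.invFun φP xP)) = _
            rw [phi_invFun hrangeP hxPB]
            have hcomp : G.compRel x xP := by
              have h1 : Q.compRel (Function.invFun φQ x) (Function.invFun φQ xQ) :=
                Quot.eqvGen_exact hcl
              have h2 := push_compRel hrangeQ hc0Q hc2Q hc1Q h1
              rw [phi_invFun hrangeQ hq, phi_invFun hrangeQ hxQB] at h2
              exact EqvGen.trans _ _ _ h2
                (vertexRel_imp_compRel (hrelv xQ hxQv xP hxPv))
            exact (Quot.eqvGen_sound hcomp).symm
          · have hc1 : c x = Sum.inr ⟨clQ x, hcl⟩ := by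
              rw [hcdef]; simp only [dif_pos hq, dif_neg hcl]
            rw [hc1]
            show Quot.mk (cGen G) (φQ (Function.invFun φQ x)) = _
            rw [phi_invFun hrangeQ hq]
        · have hp : G.edgeOf x ∈ Bp := (edge_mem_or hcover x).resolve_right hq
          have hc1 : c x = Sum.inl (clP x) := by
            rw [hcdef]; simp only [dif_neg hq]
          rw [hc1]
          show Quot.mk (cGen G) (φP (Function.invFun φP x)) = _
          rw [phi_invFun hrangeP hp]
    · intro t
      rcases t with q | ⟨q, hqne⟩
      · induction q using Quot.ind with
        | _ z =>
          show c (φP z) = _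
          have hp : G.edgeOf (φP z) ∈ Bp := mem_A_phi hrangeP z
          have hq : G.edgeOf (φP z) ∉ Bq := Set.disjoint_left.mp hdisj hp
          rw [hcdef]
          simp only [dif_neg hq]
          show Sum.inl (Quot.mk _ (Function.invFun φP (φP z))) = _
          rw [invFun_phi hinjP]
      · induction q using Quot.ind with
        | _ z =>
          show c (φQ z) = _
          have hq : G.edgeOf (φQ z) ∈ Bq := mem_A_phi hrangeQ z
          have hclz : clQ (φQ z) = Quot.mk (cGen Q) z := by
            rw [hclQ]
            show Quot.mk _ (Function.invFun φQ (φQ z)) = _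
            rw [invFun_phi hinjQ]
          have hne : ¬ clQ (φQ z) = pQ := by rw [hclz]; exact hqne
          rw [hcdef]
          simp only [dif_pos hq, dif_neg hne]
          exact congrArg Sum.inr (Subtype.ext hclz)
  have hcard1 : Nat.card (Quot (cGen G)) =
      Nat.card (Quot (cGen P)) + Nat.card {q : Quot (cGen Q) // q ≠ pQ} := by
    rw [← Nat.card_sum]
    exact Nat.card_congr hequiv
  have hcard2 : Nat.card (Quot (cGen Q)) =
      1 + Nat.card {q : Quot (cGen Q) // q ≠ pQ} := by
    haveI : Unique {q : Quot (cGen Q) // q = pQ} :=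
      ⟨⟨⟨pQ, rfl⟩⟩, fun a => Subtype.ext a.2⟩
    calc Nat.card (Quot (cGen Q))
        = Nat.card ({q : Quot (cGen Q) // q = pQ} ⊕
            {q : Quot (cGen Q) // ¬ q = pQ}) :=
          (Nat.card_congr (Equiv.sumCompl (fun q => q = pQ))).symm
      _ = Nat.card {q : Quot (cGen Q) // q = pQ} +
            Nat.card {q : Quot (cGen Q) // ¬ q = pQ} := Nat.card_sum
      _ = 1 + Nat.card {q : Quot (cGen Q) // ¬ q = pQ} := by
          rw [Nat.card_unique]
  rw [numComponents_eq, numComponents_eq, numComponents_eq, hcard1, hcard2]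
  omega

end Splits

end RibbonGraph

namespace RibbonGraph

open Relation

section ArcCore

variable {G Q : RibbonGraph} {Bq : Set (Set G.F)} {φQ : Q.F → G.F}

lemma fGen_t0 (H : RibbonGraph) (z : H.F) : fGen H z (H.t0 z) := Or.inl rfl
lemma fGen_t1 (H : RibbonGraph) (z : H.F) : fGen H z (H.t1 z) := Or.inr rfl

lemma pdual_vGen_t1 (A : Set (Set G.F)) (x : G.F) :
    vGen (G.pdual A) x (G.t1 x) := Or.inl rfl

lemma pdual_vGen_t2_of_not_mem {A : Set (Set G.F)} {x : G.F}
    (h : G.edgeOf x ∉ A) : vGen (G.pdual A) x (G.t2 x) :=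
  Or.inr (by rw [pdual_t2_of_not_mem h])

lemma pdual_vGen_t0_of_mem {A : Set (Set G.F)} {x : G.F}
    (h : G.edgeOf x ∈ A) : vGen (G.pdual A) x (G.t0 x) :=
  Or.inr (by rw [pdual_t2_of_mem h])

lemma spine_two_period {x : G.F} {N : ℕ} (hN : (sF G)^[N] x = x) :
    spine G x (2 * N) = x := by
  have := spine_add_period hN 0
  rwa [Nat.zero_add, spine_zero] at this

lemma spine_last {x : G.F} {N : ℕ} (hN : (sF G)^[N] x = x) (hN0 : 0 < N) :
    spine G x (2 * N - 1) = G.t2 x := by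
  rw [show 2 * N - 1 = 2 * (N - 1) + 1 by omega, spine_odd,
    show N - 1 = N - 1 from rfl, ← sB_iter_eq_sF_iter hN (by omega)]
  show G.t1 ((sB G)^[1] x) = G.t2 x
  rw [Function.iterate_one]
  show G.t1 (G.t1 (G.t2 x)) = G.t2 x
  rw [G.t1_invol]

/-- Walking along the spine through flags of edges not in `Bq` stays in the
same vertex class of `G^{Bq}`. -/
lemma mk_spine_chain (x : G.F) (m : ℕ)
    (hmid : ∀ i, 1 ≤ i → i < m → G.edgeOf (spine G x i) ∉ Bq) :
    Quot.mk (vGen (G.pdual Bq)) x = Quot.mk (vGen (G.pdual Bq)) (spine G x m) := by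
  induction m with
  | zero => rw [spine_zero]
  | succ m ih =>
      have h1 := ih (fun i hi1 hi2 => hmid i hi1 (by omega))
      rw [h1, spine_succ]
      by_cases hm : m % 2 = 0
      · rw [if_pos hm]
        exact Quot.sound (pdual_vGen_t1 Bq _)
      · rw [if_neg hm]
        have hm1 : 1 ≤ m := by omega
        exact Quot.sound (pdual_vGen_t2_of_not_mem (hmid m hm1 (by omega)))

variable [Nonempty Q.F]

/-- Core arc lemma: the first `Bq`-flag after `x` and the last `Bq`-flag
before `x` (equivalently after `x`, within one period) on the spine of `x`
lie in the same face of `Q`. -/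
lemma spine_firstQ_lastQ
    (hinjQ : Function.Injective φQ)
    (hrangeQ : Set.range φQ = {x : G.F | G.edgeOf x ∈ Bq})
    (hc2Q : ∀ z, φQ (Q.t2 z) = G.t2 (φQ z))
    (hc1Q : ∀ z, ∃ k : ℕ,
      φQ (Q.t1 z) = G.t1 ((G.t2 ∘ G.t1)^[k] (φQ z)) ∧
      ∀ j < k, G.edgeOf (G.t1 ((G.t2 ∘ G.t1)^[j] (φQ z))) ∉ Bq)
    {x : G.F} {N : ℕ} (hN : (sF G)^[N] x = x) (hN0 : 0 < N)
    (hx : G.edgeOf x ∉ Bq)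
    {jf jb : ℕ} (hjf1 : 1 ≤ jf) (hjfQ : G.edgeOf (spine G x jf) ∈ Bq)
    (hjfmin : ∀ m, 1 ≤ m → m < jf → G.edgeOf (spine G x m) ∉ Bq)
    (hjb1 : 1 ≤ jb) (hjb2 : jb ≤ 2 * N - 1)
    (hjbQ : G.edgeOf (spine G x jb) ∈ Bq)
    (hjbmax : ∀ m, jb < m → m ≤ 2 * N - 1 → G.edgeOf (spine G x m) ∉ Bq) :
    Quot.mk (fGen Q) (Function.invFun φQ (spine G x jb)) =
    Quot.mk (fGen Q) (Function.invFun φQ (spine G x jf)) := by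
  classical
  have hjffb : jf ≤ jb := by
    by_contra hlt
    exact hjfmin jb hjb1 (by omega) hjbQ
  -- jb is even
  have hjbeven : jb % 2 = 0 := by
    by_contra hodd
    have h1 : spine G x (jb + 1) = G.t2 (spine G x jb) := by
      rw [spine_succ, if_neg hodd]
    have h2 : G.edgeOf (spine G x (jb + 1)) ∈ Bq := by
      rw [h1, G.edgeOf_t2]
      exact hjbQ
    rcases Nat.lt_or_ge (jb + 1) (2 * N) with hlt | hge
    · exact hjbmax (jb + 1) (by omega) (by omega) h2
    · have hjb2N : jb + 1 = 2 * N := by omega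
      rw [hjb2N, spine_two_period hN] at h2
      exact hx h2
  set z := Function.invFun φQ (spine G x jb) with hz
  have hφz : φQ z = spine G x jb := phi_invFun hrangeQ hjbQ
  obtain ⟨b, hb⟩ : ∃ b, jb = 2 * b := ⟨jb / 2, by omega⟩
  have hshift : ∀ m, spine G (φQ z) m = spine G x (jb + m) := by
    intro m
    have h0 : φQ z = (sF G)^[b] x := by rw [hφz, hb, spine_even]
    rw [h0, ← spine_shift, hb]
  obtain ⟨k, hk1, hk2⟩ := spine_next hrangeQ hc1Q z
  set D := 2 * N + jf - jb with hD
  have hD1 : 1 ≤ D := by omega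
  have hmidD : ∀ m, 1 ≤ m → m < D → G.edgeOf (spine G x (jb + m)) ∉ Bq := by
    intro m hm1 hm2
    rcases Nat.lt_or_ge (jb + m) (2 * N) with hlt | hge
    · rcases Nat.lt_or_ge (jb + m) (2 * N - 1 + 1) with hlt' | hge'
      · exact hjbmax (jb + m) (by omega) (by omega)
      · -- jb + m = 2 * N - 1 handled above; here jb + m ≥ 2N impossible
        omega
    · rcases Nat.eq_or_lt_of_le hge with heq | hlt'
      · rw [← heq, spine_two_period hN]
        exact hx
      · have hm' : jb + m = (jb + m - 2 * N) + 2 * N := by omega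
        rw [hm', spine_add_period hN]
        exact hjfmin (jb + m - 2 * N) (by omega) (by omega)
  have hDQ : G.edgeOf (spine G x (jb + D)) ∈ Bq := by
    have : jb + D = jf + 2 * N := by omega
    rw [this, spine_add_period hN]
    exact hjfQ
  have hkD : 2 * k + 1 = D := by
    rcases lt_trichotomy (2 * k + 1) D with hlt | he | hgt
    · exfalso
      apply hmidD (2 * k + 1) (by omega) hlt
      rw [← hshift, hk1]
      exact mem_A_phi hrangeQ _
    · exact he
    · exfalso
      apply hk2 D hD1 hgt
      rw [hshift]
      exact hDQ
  have hfin : spine G x jf = φQ (Q.t1 z) := by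
    rw [← hk1, hkD, hshift, show jb + D = jf + 2 * N by omega,
      spine_add_period hN]
  rw [hfin, invFun_phi hinjQ]
  exact Quot.sound (fGen_t1 Q z)

/-- The first `Bq`-flag on the spine of `t1 x` is the last `Bq`-flag on the
spine of `x`. -/
lemma spine_t1_firstQ
    {x : G.F} {N : ℕ} (hN : (sF G)^[N] x = x) (hN0 : 0 < N)
    (hx : G.edgeOf x ∉ Bq)
    {jb : ℕ} (hjb1 : 1 ≤ jb) (hjb2 : jb ≤ 2 * N - 1)
    (hjbQ : G.edgeOf (spine G x jb) ∈ Bq)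
    (hjbmax : ∀ m, jb < m → m ≤ 2 * N - 1 → G.edgeOf (spine G x m) ∉ Bq) :
    ∃ j', 1 ≤ j' ∧ G.edgeOf (spine G (G.t1 x) j') ∈ Bq ∧
      (∀ m, 1 ≤ m → m < j' → G.edgeOf (spine G (G.t1 x) m) ∉ Bq) ∧
      spine G (G.t1 x) j' = spine G x jb := by
  have hrev : ∀ m, m ≤ 2 * N + 1 →
      spine G (G.t1 x) m = spine G x (2 * N + 1 - m) :=
    fun m hm => spine_t1_rev hN hN0 hm
  have hwit : spine G (G.t1 x) (2 * N + 1 - jb) = spine G x jb := by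
    rw [hrev (2 * N + 1 - jb) (by omega)]
    congr 1
    omega
  refine ⟨2 * N + 1 - jb, by omega, by rw [hwit]; exact hjbQ, ?_, hwit⟩
  intro m hm1 hm2
  rw [hrev m (by omega)]
  rcases Nat.eq_or_lt_of_le (show 2 * N + 1 - m ≤ 2 * N by omega)
    with heq | hlt'
  · rw [heq, spine_two_period hN]
    exact hx
  · exact hjbmax (2 * N + 1 - m) (by omega) (by omega)

/-- The first `Bq`-flag on the spine of `t2 x` is the last `Bq`-flag on the
spine of `x`. -/
lemma spine_t2_firstQ
    {x : G.F} {N : ℕ} (hN : (sF G)^[N] x = x) (hN0 : 0 < N)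
    (hx : G.edgeOf x ∉ Bq)
    {jb : ℕ} (hjb1 : 1 ≤ jb) (hjb2 : jb ≤ 2 * N - 1)
    (hjbQ : G.edgeOf (spine G x jb) ∈ Bq)
    (hjbmax : ∀ m, jb < m → m ≤ 2 * N - 1 → G.edgeOf (spine G x m) ∉ Bq) :
    ∃ j', 1 ≤ j' ∧ G.edgeOf (spine G (G.t2 x) j') ∈ Bq ∧
      (∀ m, 1 ≤ m → m < j' → G.edgeOf (spine G (G.t2 x) m) ∉ Bq) ∧
      spine G (G.t2 x) j' = spine G x jb := by
  have hjb2' : jb ≤ 2 * N - 2 := by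
    rcases Nat.eq_or_lt_of_le hjb2 with heq | hlt
    · exfalso
      rw [heq, spine_last hN hN0, G.edgeOf_t2] at hjbQ
      exact hx hjbQ
    · omega
  have hrev : ∀ m, m ≤ 2 * N - 1 →
      spine G (G.t2 x) m = spine G x (2 * N - 1 - m) :=
    fun m hm => spine_t2_rev hN hN0 hm
  have hwit : spine G (G.t2 x) (2 * N - 1 - jb) = spine G x jb := by
    rw [hrev (2 * N - 1 - jb) (by omega)]
    congr 1
    omega
  refine ⟨2 * N - 1 - jb, by omega, by rw [hwit]; exact hjbQ, ?_, hwit⟩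
  intro m hm1 hm2
  rw [hrev m (by omega)]
  exact hjbmax (2 * N - 1 - m) (by omega) (by omega)

end ArcCore

end RibbonGraph

namespace RibbonGraph

open Relation

section MainCount

variable {G P Q : RibbonGraph} {Bp Bq : Set (Set G.F)}
  {φP : P.F → G.F} {φQ : Q.F → G.F} {v : Set G.F}

lemma numVertices_pdual_split [Nonempty P.F] [Nonempty Q.F]
    (hinjP : Function.Injective φP)
    (hrangeP : Set.range φP = {x : G.F | G.edgeOf x ∈ Bp})
    (hc2P : ∀ z, φP (P.t2 z) = G.t2 (φP z))
    (hc1P : ∀ z, ∃ k : ℕ,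
      φP (P.t1 z) = G.t1 ((G.t2 ∘ G.t1)^[k] (φP z)) ∧
      ∀ j < k, G.edgeOf (G.t1 ((G.t2 ∘ G.t1)^[j] (φP z))) ∉ Bp)
    (hinjQ : Function.Injective φQ)
    (hrangeQ : Set.range φQ = {x : G.F | G.edgeOf x ∈ Bq})
    (hc0Q : ∀ z, φQ (Q.t0 z) = G.t0 (φQ z))
    (hc2Q : ∀ z, φQ (Q.t2 z) = G.t2 (φQ z))
    (hc1Q : ∀ z, ∃ k : ℕ,
      φQ (Q.t1 z) = G.t1 ((G.t2 ∘ G.t1)^[k] (φQ z)) ∧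
      ∀ j < k, G.edgeOf (G.t1 ((G.t2 ∘ G.t1)^[j] (φQ z))) ∉ Bq)
    (hdisj : Disjoint Bp Bq) (hcover : Bp ∪ Bq = G.edgeSet)
    (hv : G.verticesIn Bp ∩ G.verticesIn Bq = {v}) :
    (G.pdual Bq).numVertices + 1 = Q.numFaces + P.numVertices := by
  classical
  haveI := G.fintype; haveI := P.fintype; haveI := Q.fintype
  have hvmem : v ∈ G.verticesIn Bp ∩ G.verticesIn Bq := by rw [hv]; rfl
  obtain ⟨hvert, xP, hxPv, hxPB⟩ := hvmem.1
  obtain ⟨-, xQ, hxQv, hxQB⟩ := hvmem.2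
  have hexv : ∀ x : G.F, G.edgeOf x ∉ Bq → G.vertexOf x = v →
      ∃ j, 1 ≤ j ∧ G.edgeOf (spine G x j) ∈ Bq := by
    intro x hx hvx
    have hxQ : xQ ∈ G.vertexOf x := by rw [hvx]; exact hxQv
    obtain ⟨N, hN0, hN⟩ := exists_sF_period x
    obtain ⟨j, hj, hjs⟩ := vertexOf_subset_spine hN hN0 xQ hxQ
    refine ⟨j, ?_, by rw [hjs]; exact hxQB⟩
    rcases Nat.eq_zero_or_pos j with rfl | h
    · rw [spine_zero] at hjs
      exfalso
      apply hx
      rw [hjs]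
      exact hxQB
    · exact h
  have hallP : ∀ x : G.F, G.edgeOf x ∉ Bq → G.vertexOf x ≠ v →
      ∀ y ∈ G.vertexOf x, G.edgeOf y ∉ Bq := by
    intro x hx hvx y hy hyQ
    exact hvx (vertexOf_eq_v_of_mixed hv hy
      ((edge_mem_or hcover x).resolve_right hx) hyQ)
  set fwd : G.F → G.F := fun x =>
    if h : ∃ j, 1 ≤ j ∧ G.edgeOf (spine G x j) ∈ Bq then spine G x (Nat.find h)
    else x with hfwddef
  have hfwd_spec : ∀ x (h : ∃ j, 1 ≤ j ∧ G.edgeOf (spine G x j) ∈ Bq),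
      fwd x = spine G x (Nat.find h) ∧ 1 ≤ Nat.find h ∧
      G.edgeOf (spine G x (Nat.find h)) ∈ Bq ∧
      ∀ m, 1 ≤ m → m < Nat.find h → G.edgeOf (spine G x m) ∉ Bq := by
    intro x h
    refine ⟨by simp only [hfwddef]; exact dif_pos h, (Nat.find_spec h).1,
      (Nat.find_spec h).2, ?_⟩
    intro m hm1 hm2 hQ
    exact Nat.find_min h hm2 ⟨hm1, hQ⟩
  have hfwd_eq : ∀ x j', 1 ≤ j' → G.edgeOf (spine G x j') ∈ Bq →
      (∀ m, 1 ≤ m → m < j' → G.edgeOf (spine G x m) ∉ Bq) →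
      fwd x = spine G x j' := by
    intro x j' h1 h2 h3
    have hex : ∃ j, 1 ≤ j ∧ G.edgeOf (spine G x j) ∈ Bq := ⟨j', h1, h2⟩
    obtain ⟨hfx, hf1, hfQ, hfmin⟩ := hfwd_spec x hex
    rw [hfx]
    congr 1
    apply le_antisymm
    · exact Nat.find_le ⟨h1, h2⟩
    · by_contra hlt
      push_neg at hlt
      exact h3 _ hf1 hlt hfQ
  have hfwdQ : ∀ x, (∃ j, 1 ≤ j ∧ G.edgeOf (spine G x j) ∈ Bq) →
      G.edgeOf (fwd x) ∈ Bq := by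
    intro x h
    obtain ⟨hfx, _, hQ, _⟩ := hfwd_spec x h
    rw [hfx]
    exact hQ
  set qcl : G.F → Quot (fGen Q) := fun x => Quot.mk _ (Function.invFun φQ x)
    with hqcl
  have hqcl_t0 : ∀ x, G.edgeOf x ∈ Bq → qcl (G.t0 x) = qcl x := by
    intro x hx
    simp only [hqcl]
    rw [invFun_t0 hinjQ hrangeQ hc0Q hx]
    exact (Quot.sound (fGen_t0 Q _)).symm
  have hqcl_t1 : ∀ x, G.edgeOf x ∈ Bq → G.edgeOf (G.t1 x) ∈ Bq →
      qcl (G.t1 x) = qcl x := by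
    intro x hx ht1
    have h2 := t1_step hinjQ hrangeQ hc1Q (z := Function.invFun φQ x)
      (by rw [phi_invFun hrangeQ hx]; exact ht1)
    rw [phi_invFun hrangeQ hx] at h2
    have h3 : Function.invFun φQ (G.t1 x) = Q.t1 (Function.invFun φQ x) := by
      rw [← h2, invFun_phi hinjQ]
    simp only [hqcl]
    rw [h3]
    exact (Quot.sound (fGen_t1 Q _)).symm
  have harc : ∀ x : G.F, G.edgeOf x ∉ Bq → G.vertexOf x = v →
      qcl (fwd (G.t1 x)) = qcl (fwd x) ∧ qcl (fwd (G.t2 x)) = qcl (fwd x) := by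
    intro x hx hvx
    obtain ⟨N, hN0, hN⟩ := exists_sF_period x
    have hex := hexv x hx hvx
    obtain ⟨j0, hj01, hj0Q⟩ := hex
    obtain ⟨j1, hj1lt, hj1eq⟩ : ∃ j1, j1 < 2 * N ∧ spine G x j1 = spine G x j0 :=
      ⟨j0 % (2 * N), Nat.mod_lt _ (by omega), (spine_mod hN hN0 j0).symm⟩
    have hj11 : 1 ≤ j1 := by
      rcases Nat.eq_zero_or_pos j1 with rfl | h
      · rw [spine_zero] at hj1eq
        exfalso
        apply hx
        rw [hj1eq]
        exact hj0Q
      · exact h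
    set Pq : ℕ → Prop := fun j => G.edgeOf (spine G x j) ∈ Bq with hPq
    set jb := Nat.findGreatest Pq (2 * N - 1) with hjbdef
    have hPqj1 : Pq j1 := by rw [hPq]; show G.edgeOf (spine G x j1) ∈ Bq; rw [hj1eq]; exact hj0Q
    have hjbge : j1 ≤ jb := Nat.le_findGreatest (by omega) hPqj1
    have hjb1 : 1 ≤ jb := le_trans hj11 hjbge
    have hjb2 : jb ≤ 2 * N - 1 := Nat.findGreatest_le _
    have hjbQ : G.edgeOf (spine G x jb) ∈ Bq :=
      Nat.findGreatest_spec (m := j1) (by omega) hPqj1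
    have hjbmax : ∀ m, jb < m → m ≤ 2 * N - 1 → G.edgeOf (spine G x m) ∉ Bq :=
      fun m h1 h2 => Nat.findGreatest_is_greatest h1 h2
    have hex' : ∃ j, 1 ≤ j ∧ G.edgeOf (spine G x j) ∈ Bq := ⟨j0, hj01, hj0Q⟩
    obtain ⟨hfx, hjf1, hjfQ, hjfmin⟩ := hfwd_spec x hex'
    have hcore := spine_firstQ_lastQ hinjQ hrangeQ hc2Q hc1Q hN hN0 hx
      hjf1 hjfQ hjfmin hjb1 hjb2 hjbQ hjbmax
    constructor
    · obtain ⟨j', h1, h2, h3, h4⟩ := spine_t1_firstQ hN hN0 hx hjb1 hjb2 hjbQ hjbmax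
      have hft1 : fwd (G.t1 x) = spine G x jb := by
        rw [hfwd_eq (G.t1 x) j' h1 h2 h3, h4]
      rw [hft1, hfx]
      simp only [hqcl]
      exact hcore
    · obtain ⟨j', h1, h2, h3, h4⟩ := spine_t2_firstQ hN hN0 hx hjb1 hjb2 hjbQ hjbmax
      have hft2 : fwd (G.t2 x) = spine G x jb := by
        rw [hfwd_eq (G.t2 x) j' h1 h2 h3, h4]
      rw [hft2, hfx]
      simp only [hqcl]
      exact hcore
  -- the classifying map
  set c : G.F → Quot (fGen Q) ⊕ ↥(G.verticesIn Bp \ {v}) := fun x =>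
    if hq : G.edgeOf x ∈ Bq then Sum.inl (qcl x)
    else if hvx : G.vertexOf x = v then Sum.inl (qcl (fwd x))
    else Sum.inr ⟨G.vertexOf x, ⟨⟨vertexOf_mem_vertices x,
      ⟨x, mem_vertexOf_self x, (edge_mem_or hcover x).resolve_right hq⟩⟩, hvx⟩⟩
    with hcdef
  have hwd : ∀ x y : G.F, vGen (G.pdual Bq) x y → c x = c y := by
    intro x y hxy
    rcases hxy with h1 | h2
    · rw [pdual_t1_def] at h1
      subst h1
      by_cases hqx : G.edgeOf x ∈ Bq <;> by_cases hqy : G.edgeOf (G.t1 x) ∈ Bq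
      · simp only [hcdef, dif_pos hqx, dif_pos hqy]
        exact congrArg Sum.inl (hqcl_t1 x hqx hqy).symm
      · have hvy : G.vertexOf (G.t1 x) = v := by
          apply vertexOf_eq_v_of_mixed hv (y := x) _
            ((edge_mem_or hcover (G.t1 x)).resolve_right hqy) hqx
          have h := t1_mem_of_mem (mem_vertexOf_self (G.t1 x))
          rwa [G.t1_invol] at h
        have hfwdt1 : fwd (G.t1 x) = x := by
          have h' := hfwd_eq (G.t1 x) 1 le_rfl
            (by rw [spine_one, G.t1_invol]; exact hqx)
            (fun m hm1 hm2 => absurd hm2 (by omega))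
          rwa [spine_one, G.t1_invol] at h'
        simp only [hcdef, dif_pos hqx, dif_neg hqy, dif_pos hvy, hfwdt1]
      · have hvx : G.vertexOf x = v := vertexOf_eq_v_of_mixed hv
          (vertexRel_t1 x) ((edge_mem_or hcover x).resolve_right hqx) hqy
        have hfwdx : fwd x = G.t1 x := by
          have h' := hfwd_eq x 1 le_rfl (by rw [spine_one]; exact hqy)
            (fun m hm1 hm2 => absurd hm2 (by omega))
          rwa [spine_one] at h'
        simp only [hcdef, dif_neg hqx, dif_pos hqy, dif_pos hvx, hfwdx]
      · by_cases hvx : G.vertexOf x = v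
        · have hvy : G.vertexOf (G.t1 x) = v := by
            rw [vertexOf_t1']; exact hvx
          simp only [hcdef, dif_neg hqx, dif_neg hqy, dif_pos hvx, dif_pos hvy]
          exact congrArg Sum.inl ((harc x hqx hvx).1).symm
        · have hvy : ¬ G.vertexOf (G.t1 x) = v := by
            rw [vertexOf_t1']; exact hvx
          simp only [hcdef, dif_neg hqx, dif_neg hqy, dif_neg hvx, dif_neg hvy]
          exact congrArg Sum.inr (Subtype.ext (vertexOf_t1' x).symm)
    · by_cases hqx : G.edgeOf x ∈ Bq
      · rw [pdual_t2_of_mem hqx] at h2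
        subst h2
        have hqy : G.edgeOf (G.t0 x) ∈ Bq := by rw [G.edgeOf_t0]; exact hqx
        simp only [hcdef, dif_pos hqx, dif_pos hqy]
        exact congrArg Sum.inl (hqcl_t0 x hqx).symm
      · rw [pdual_t2_of_not_mem hqx] at h2
        subst h2
        have hqy : G.edgeOf (G.t2 x) ∉ Bq := by rw [G.edgeOf_t2]; exact hqx
        by_cases hvx : G.vertexOf x = v
        · have hvy : G.vertexOf (G.t2 x) = v := by
            rw [vertexOf_t2']; exact hvx
          simp only [hcdef, dif_neg hqx, dif_neg hqy, dif_pos hvx, dif_pos hvy]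
          exact congrArg Sum.inl ((harc x hqx hvx).2).symm
        · have hvy : ¬ G.vertexOf (G.t2 x) = v := by
            rw [vertexOf_t2']; exact hvx
          simp only [hcdef, dif_neg hqx, dif_neg hqy, dif_neg hvx, dif_neg hvy]
          exact congrArg Sum.inr (Subtype.ext (vertexOf_t2' x).symm)
  have hwdQf : ∀ z z' : Q.F, fGen Q z z' →
      Quot.mk (vGen (G.pdual Bq)) (φQ z) = Quot.mk (vGen (G.pdual Bq)) (φQ z') := by
    intro z z' hzz
    rcases hzz with h0 | h1
    · rw [h0, hc0Q]
      exact Quot.sound (pdual_vGen_t0_of_mem (mem_A_phi hrangeQ z))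
    · rw [h1]
      obtain ⟨k, hk1, hk2⟩ := spine_next hrangeQ hc1Q z
      rw [← hk1]
      exact mk_spine_chain (φQ z) (2 * k + 1) hk2
  set d : Quot (fGen Q) ⊕ ↥(G.verticesIn Bp \ {v}) → Quot (vGen (G.pdual Bq)) :=
    Sum.elim (Quot.lift (fun z => Quot.mk (vGen (G.pdual Bq)) (φQ z)) hwdQf)
      (fun w => Quot.mk (vGen (G.pdual Bq)) (Classical.choose w.2.1.2))
    with hddef
  have hdinr : ∀ w : ↥(G.verticesIn Bp \ {v}), ∀ x, x ∈ (w : Set G.F) →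
      G.edgeOf x ∉ Bq → d (Sum.inr w) = Quot.mk (vGen (G.pdual Bq)) x := by
    intro w x hxw hxq
    obtain ⟨hcw1, hcw2⟩ := Classical.choose_spec w.2.1.2
    have hw1 : (w : Set G.F) = G.vertexOf x := eq_vertexOf_of_mem w.2.1.1 hxw
    have hvnx : G.vertexOf x ≠ v := by
      rw [← hw1]
      exact w.2.2
    have hall := hallP x hxq hvnx
    have hpd : (G.pdual Bq).vertexOf x = G.vertexOf x :=
      vertexOf_pdual_of_allNot hall
    have hcwmem : Classical.choose w.2.1.2 ∈ (G.pdual Bq).vertexOf x := by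
      rw [hpd, ← hw1]
      exact hcw1
    have hrel : (G.pdual Bq).vertexRel x (Classical.choose w.2.1.2) := hcwmem
    simp only [hddef, Sum.elim_inr]
    exact (Quot.eqvGen_sound hrel).symm
  have hequiv : Quot (vGen (G.pdual Bq)) ≃
      Quot (fGen Q) ⊕ ↥(G.verticesIn Bp \ {v}) := by
    refine ⟨Quot.lift c hwd, d, ?_, ?_⟩
    · intro q
      induction q using Quot.ind with
      | _ x =>
        show d (c x) = Quot.mk _ x
        by_cases hqx : G.edgeOf x ∈ Bq
        · have hcx : c x = Sum.inl (Quot.mk (fGen Q) (Function.invFun φQ x)) := by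
            simp only [hcdef, hqcl, dif_pos hqx]
          rw [hcx]
          show Quot.mk (vGen (G.pdual Bq)) (φQ (Function.invFun φQ x)) = _
          rw [phi_invFun hrangeQ hqx]
        · by_cases hvx : G.vertexOf x = v
          · have hex := hexv x hqx hvx
            have hcx : c x = Sum.inl (Quot.mk (fGen Q)
                (Function.invFun φQ (fwd x))) := by
              simp only [hcdef, hqcl, dif_neg hqx, dif_pos hvx]
            rw [hcx]
            show Quot.mk (vGen (G.pdual Bq)) (φQ (Function.invFun φQ (fwd x))) = _
            rw [phi_invFun hrangeQ (hfwdQ x hex)]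
            obtain ⟨hfx, h1, hQ, hmin⟩ := hfwd_spec x hex
            rw [hfx]
            exact (mk_spine_chain (G := G) (Bq := Bq) x (Nat.find hex) hmin).symm
          · simp only [hcdef, dif_neg hqx, dif_neg hvx]
            exact hdinr _ x (show x ∈ G.vertexOf x from mem_vertexOf_self (G := G) x) hqx
    · intro t
      rcases t with q | w
      · induction q using Quot.ind with
        | _ z =>
          show c (φQ z) = Sum.inl (Quot.mk (fGen Q) z)
          have hq : G.edgeOf (φQ z) ∈ Bq := mem_A_phi hrangeQ z
          simp only [hcdef, hqcl, dif_pos hq, invFun_phi hinjQ]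
      · obtain ⟨hcw1, hcw2⟩ := Classical.choose_spec w.2.1.2
        have hqcw : G.edgeOf (Classical.choose w.2.1.2) ∉ Bq :=
          Set.disjoint_left.mp hdisj hcw2
        have hw1 : (w : Set G.F) = G.vertexOf (Classical.choose w.2.1.2) :=
          eq_vertexOf_of_mem w.2.1.1 hcw1
        have hvncw : ¬ G.vertexOf (Classical.choose w.2.1.2) = v := by
          rw [← hw1]
          exact w.2.2
        show c (Classical.choose w.2.1.2) = Sum.inr w
        simp only [hcdef, dif_neg hqcw, dif_neg hvncw]
        exact congrArg Sum.inr (Subtype.ext hw1.symm)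
  have hPV : P.numVertices = (G.verticesIn Bp).ncard :=
    numVertices_induced hinjP hrangeP hc2P hc1P
  have hsplit : (G.verticesIn Bp).ncard = (G.verticesIn Bp \ {v}).ncard + 1 := by
    rw [← Set.ncard_insert_of_notMem (a := v) (s := G.verticesIn Bp \ {v})
      (by simp) (Set.toFinite _),
      Set.insert_diff_singleton, Set.insert_eq_self.mpr hvmem.1]
  have hcard : (G.pdual Bq).numVertices =
      Q.numFaces + (G.verticesIn Bp \ {v}).ncard := by
    rw [numVertices_eq, numFaces_eq, ← Nat.card_coe_set_eq, ← Nat.card_sum]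
    exact Nat.card_congr hequiv
  rw [hcard, hPV, hsplit]
  omega

end MainCount

end RibbonGraph
/-- If `G = P ⊕ Q` is a 1-sum at a vertex `v` with `Q` plane, then the genus of
the partial dual `G^{E(Q)}` equals the genus of `P`; moreover every vertex of
`P` other than `v` is also a vertex of `G^{E(Q)}`. -/
theorem genus_pdual_of_oneSum (G P Q : RibbonGraph) (Bp Bq : Set (Set G.F))
    (v : Set G.F)
    (hP : RibbonGraph.IsInducedSubgraph G P Bp)
    (hQ : RibbonGraph.IsInducedSubgraph G Q Bq)
    (hsum : G.IsOneSumAt Bp Bq v)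
    (hcover : Bp ∪ Bq = G.edgeSet)
    (hQplane : Q.IsPlane) :
    (G.pdual Bq).genus = P.genus ∧
    ∀ w ∈ G.verticesIn Bp, w ≠ v → w ∈ (G.pdual Bq).vertices := by
  open RibbonGraph in
  obtain ⟨φP, hAP, hinjP, hrangeP, hc0P, hc2P, hc1P⟩ := hP
  obtain ⟨φQ, hAQ, hinjQ, hrangeQ, hc0Q, hc2Q, hc1Q⟩ := hQ
  obtain ⟨hBpE, hBqE, hBpne, hBqne, hdisj, hvv, hv⟩ := hsum
  haveI : Nonempty P.F := by
    obtain ⟨e, he⟩ := hBpne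
    obtain ⟨x, hex⟩ := hBpE he
    have hx : x ∈ Set.range φP := by
      rw [hrangeP]
      show G.edgeOf x ∈ Bp
      rw [← hex]
      exact he
    obtain ⟨z, -⟩ := hx
    exact ⟨z⟩
  haveI : Nonempty Q.F := by
    obtain ⟨e, he⟩ := hBqne
    obtain ⟨x, hex⟩ := hBqE he
    have hx : x ∈ Set.range φQ := by
      rw [hrangeQ]
      show G.edgeOf x ∈ Bq
      rw [← hex]
      exact he
    obtain ⟨z, -⟩ := hx
    exact ⟨z⟩
  have h1 : (G.pdual Bq).numVertices + 1 = Q.numFaces + P.numVertices :=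
    numVertices_pdual_split hinjP hrangeP hc2P hc1P
      hinjQ hrangeQ hc0Q hc2Q hc1Q hdisj hcover hv
  have h2 : (G.pdual Bp).numVertices + 1 = P.numFaces + Q.numVertices :=
    numVertices_pdual_split hinjQ hrangeQ hc2Q hc1Q
      hinjP hrangeP hc0P hc2P hc1P hdisj.symm
      (by rw [Set.union_comm]; exact hcover)
      (by rw [Set.inter_comm]; exact hv)
  have h3 : (G.pdual Bq).numFaces = (G.pdual Bp).numVertices :=
    numFaces_pdual_eq hdisj hcover
  have h4 : (G.pdual Bq).numEdges = G.numEdges := numEdges_pdual Bq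
  have h5 : G.numEdges = P.numEdges + Q.numEdges :=
    numEdges_split hinjP hrangeP hc0P hc2P hinjQ hrangeQ hc0Q hc2Q hdisj hcover
  have h6 : (G.pdual Bq).numComponents = G.numComponents :=
    numComponents_pdual Bq
  have h7 : G.numComponents + 1 = P.numComponents + Q.numComponents :=
    numComponents_split hinjP hrangeP hc0P hc2P hc1P
      hinjQ hrangeQ hc0Q hc2Q hc1Q hdisj hcover hv
  have hQ0 : 2 * (Q.numComponents : ℤ) - Q.numVertices + Q.numEdges
      - Q.numFaces = 0 := hQplane
  have heps : (G.pdual Bq).eulerGenus = P.eulerGenus := by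
    show 2 * ((G.pdual Bq).numComponents : ℤ) - (G.pdual Bq).numVertices
        + (G.pdual Bq).numEdges - (G.pdual Bq).numFaces
      = 2 * (P.numComponents : ℤ) - P.numVertices + P.numEdges - P.numFaces
    rw [h3, h4, h6]
    omega
  constructor
  · show (G.pdual Bq).eulerGenus / 2 = P.eulerGenus / 2
    rw [heps]
  · intro w hw hwv
    obtain ⟨hwvert, xw, hxww, hxwB⟩ := hw
    have hweq : w = G.vertexOf xw := eq_vertexOf_of_mem hwvert hxww
    have hvnx : G.vertexOf xw ≠ v := by
      rw [← hweq]
      exact hwv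
    have hall : ∀ y ∈ G.vertexOf xw, G.edgeOf y ∉ Bq :=
      fun y hy hyQ => hvnx (vertexOf_eq_v_of_mixed hv hy hxwB hyQ)
    have hpd : (G.pdual Bq).vertexOf xw = G.vertexOf xw :=
      vertexOf_pdual_of_allNot hall
    exact ⟨xw, by rw [hweq, ← hpd]⟩
end

section
/- Let G be an orientable ribbon graph expressible as a join G = P ∨ Q, and let A ⊆ E(G). Then G^A = P^{A ∩ E(P)} ∨ Q^{A ∩ E(Q)}, where the joins act naturally with respect to partial duality. -/
namespace RibbonGraph

/-! ### Auxiliary lemmas for `pdual_of_join` -/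

section Aux

attribute [reducible] pdual

open Classical in
lemma pdual_t0_apply (G : RibbonGraph) (A : Set (Set G.F)) (x : G.F) :
    (G.pdual A).t0 x = if G.edgeOf x ∈ A then G.t2 x else G.t0 x := rfl

open Classical in
lemma pdual_t2_apply (G : RibbonGraph) (A : Set (Set G.F)) (x : G.F) :
    (G.pdual A).t2 x = if G.edgeOf x ∈ A then G.t0 x else G.t2 x := rfl

lemma pdual_t1 (G : RibbonGraph) (A : Set (Set G.F)) : (G.pdual A).t1 = G.t1 := rfl

lemma edgeOf_pdual (G : RibbonGraph) (A : Set (Set G.F)) (x : G.F) :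
    (G.pdual A).edgeOf x = G.edgeOf x := by
  unfold edgeOf
  rw [pdual_t0_apply, pdual_t2_apply]
  by_cases h : G.edgeOf x ∈ A
  · rw [if_pos h, if_pos h, pdual_t0_apply]
    have h2 : G.edgeOf (G.t0 x) ∈ A := by rwa [G.edgeOf_t0]
    rw [if_pos h2, ← G.comm]
    ext y
    simp only [Set.mem_insert_iff, Set.mem_singleton_iff]
    tauto
  · rw [if_neg h, if_neg h, pdual_t0_apply]
    have h2 : G.edgeOf (G.t2 x) ∉ A := by rwa [G.edgeOf_t2]
    rw [if_neg h2]

lemma edgeOf_pdual_t2 (G : RibbonGraph) (A : Set (Set G.F)) (z : G.F) :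
    G.edgeOf ((G.pdual A).t2 z) = G.edgeOf z := by
  rw [pdual_t2_apply]
  split
  · exact G.edgeOf_t0 z
  · exact G.edgeOf_t2 z

lemma edgeSet_pdual (G : RibbonGraph) (A : Set (Set G.F)) :
    (G.pdual A).edgeSet = G.edgeSet := by
  unfold edgeSet
  simp only [edgeOf_pdual]

lemma vertexOf_congr (G : RibbonGraph) {a b : G.F} (h : G.vertexRel a b) :
    G.vertexOf a = G.vertexOf b := by
  ext y
  constructor
  · intro hy
    exact Relation.EqvGen.trans _ _ _ (Relation.EqvGen.symm _ _ h) hy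
  · intro hy
    exact Relation.EqvGen.trans _ _ _ h hy

lemma at_vertex (G : RibbonGraph) {B C : Set (Set G.F)} {v : Set G.F}
    (hvint : G.verticesIn B ∩ G.verticesIn C = {v}) {u : G.F}
    (hB : G.edgeOf u ∈ B) (hC : G.edgeOf (G.t1 u) ∈ C) : u ∈ v := by
  have h1 : G.vertexOf u ∈ G.verticesIn B :=
    ⟨⟨u, rfl⟩, u, Relation.EqvGen.refl u, hB⟩
  have h2 : G.vertexOf u ∈ G.verticesIn C :=
    ⟨⟨u, rfl⟩, G.t1 u, Relation.EqvGen.rel _ _ (Or.inl rfl), hC⟩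
  have h3 : G.vertexOf u ∈ ({v} : Set (Set G.F)) := hvint ▸ ⟨h1, h2⟩
  have h4 : G.vertexOf u = v := h3
  exact h4 ▸ Relation.EqvGen.refl u

lemma crossing (G : RibbonGraph) (B : Set (Set G.F)) {a b : G.F}
    (h : G.vertexRel a b) (ha : G.edgeOf a ∈ B) (hb : G.edgeOf b ∉ B) :
    ∃ u, G.vertexRel a u ∧ G.edgeOf u ∈ B ∧ G.edgeOf (G.t1 u) ∉ B := by
  suffices H : ∀ a b : G.F, G.vertexRel a b →
      ((G.edgeOf a ∈ B → G.edgeOf b ∉ B →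
        ∃ u, G.vertexRel a u ∧ G.edgeOf u ∈ B ∧ G.edgeOf (G.t1 u) ∉ B) ∧
       (G.edgeOf b ∈ B → G.edgeOf a ∉ B →
        ∃ u, G.vertexRel b u ∧ G.edgeOf u ∈ B ∧ G.edgeOf (G.t1 u) ∉ B)) by
    exact (H a b h).1 ha hb
  intro a b h
  induction h with
  | rel x y hxy =>
      constructor
      · intro hx hy
        rcases hxy with h1 | h2
        · exact ⟨x, Relation.EqvGen.refl x, hx, by rw [← h1]; exact hy⟩
        · exact absurd hx (by rwa [h2, G.edgeOf_t2] at hy)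
      · intro hy hx
        rcases hxy with h1 | h2
        · refine ⟨y, Relation.EqvGen.refl y, hy, ?_⟩
          rw [h1, G.t1_invol]
          exact hx
        · exact absurd hy (by rw [h2, G.edgeOf_t2]; exact hx)
  | refl x => exact ⟨fun h1 h2 => absurd h1 h2, fun h1 h2 => absurd h1 h2⟩
  | symm x y hxy ih => exact ⟨ih.2, ih.1⟩
  | trans x y z hxy hyz ih1 ih2 =>
      constructor
      · intro hx hz
        by_cases hy : G.edgeOf y ∈ B
        · obtain ⟨u, hu1, hu2, hu3⟩ := ih2.1 hy hz
          exact ⟨u, Relation.EqvGen.trans _ _ _ hxy hu1, hu2, hu3⟩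
        · exact ih1.1 hx hy
      · intro hz hx
        by_cases hy : G.edgeOf y ∈ B
        · obtain ⟨u, hu1, hu2, hu3⟩ := ih1.2 hy hx
          exact ⟨u, Relation.EqvGen.trans _ _ _ (Relation.EqvGen.symm _ _ hyz) hu1, hu2, hu3⟩
        · exact ih2.2 hz hy

lemma sign_iterate {F : Type} (s : F → Bool) (t d : F → F)
    (ht : ∀ z, s (t z) = !s z) (hd : ∀ z, s (d z) = !s z) (k : ℕ) (y : F) :
    s ((d ∘ t)^[k] y) = s y := by
  induction k with
  | zero => rfl
  | succ n ih =>
      rw [Function.iterate_succ_apply', Function.comp_apply, hd, ht, ih, Bool.not_not]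

lemma three_le_card {α : Type} [Finite α] {a b c : α}
    (hab : a ≠ b) (hac : a ≠ c) (hbc : b ≠ c) : 3 ≤ Nat.card α := by
  have hinj : Function.Injective ![a, b, c] := by
    intro i j hij
    fin_cases i <;> fin_cases j <;> simp_all
  calc (3 : ℕ) = Nat.card (Fin 3) := by simp
    _ ≤ Nat.card α := Nat.card_le_card_of_injective _ hinj

lemma find_unique {P : ℕ → Prop} {k k' : ℕ} (h1 : P k) (h2 : ∀ j < k, ¬P j)
    (h3 : P k') (h4 : ∀ j < k', ¬P j) : k = k' := by
  rcases lt_trichotomy k k' with h | h | h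
  · exact absurd h1 (h4 k h)
  · exact h
  · exact absurd h3 (h2 k' h)

lemma rel_iterate {F : Type} (t d : F → F) (k : ℕ) (y : F) :
    Relation.EqvGen (fun p q => q = t p ∨ q = d p) y ((d ∘ t)^[k] y) := by
  induction k with
  | zero => exact Relation.EqvGen.refl y
  | succ n ih =>
      rw [Function.iterate_succ_apply']
      exact Relation.EqvGen.trans _ _ _ ih
        (Relation.EqvGen.trans _ _ _ (Relation.EqvGen.rel _ _ (Or.inl rfl))
          (Relation.EqvGen.rel _ _ (Or.inr rfl)))

lemma exists_periodic {F : Type} [Fintype F] (f : F → F) (hf : Function.Injective f) (y : F) :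
    ∃ m, 0 < m ∧ f^[m] y = y := by
  have haux : ∀ a b : ℕ, a < b → f^[a] y = f^[b] y → ∃ m, 0 < m ∧ f^[m] y = y := by
    intro a b hab heq
    refine ⟨b - a, by omega, ?_⟩
    have h1 : f^[a] (f^[b - a] y) = f^[b - a] (f^[a] y) := by
      rw [← Function.iterate_add_apply, ← Function.iterate_add_apply, Nat.add_comm]
    have h2 : f^[b - a] (f^[a] y) = f^[a] y := by
      rw [← Function.iterate_add_apply]
      have : b - a + a = b := by omega
      rw [this, ← heq]
    exact (hf.iterate a) (by rw [h1, h2])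
  have hni : ¬ Function.Injective (fun n : Fin (Fintype.card F + 1) => f^[n.val] y) := by
    intro hinj
    have := Fintype.card_le_of_injective _ hinj
    simp at this
  rw [Function.not_injective_iff] at hni
  obtain ⟨i, j, hij, hne⟩ := hni
  have hne' : i.val ≠ j.val := fun h => hne (Fin.ext h)
  rcases Nat.lt_or_ge i.val j.val with h | h
  · exact haux i.val j.val h hij
  · exact haux j.val i.val (by omega) hij.symm

end Aux

section Walk

lemma walk_core (G : RibbonGraph) (B C : Set (Set G.F)) (hcover : B ∪ C = G.edgeSet)
    (v : Set G.F) (hvint : G.verticesIn B ∩ G.verticesIn C = {v})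
    (d : G.F → G.F) (hd : ∀ z, G.edgeOf (d z) = G.edgeOf z) (hdinj : Function.Injective d)
    (s : G.F → Bool) (hs1 : ∀ z, s (G.t1 z) = !s z) (hsd : ∀ z, s (d z) = !s z)
    (y0 : G.F) (h0 : G.edgeOf y0 ∈ B) (hH0 : G.edgeOf (G.t1 y0) ∉ B) :
    ∃ k, 0 < k ∧ G.edgeOf (G.t1 ((d ∘ G.t1)^[k] y0)) ∈ B ∧
      (∀ j < k, G.edgeOf (G.t1 ((d ∘ G.t1)^[j] y0)) ∉ B) ∧
      G.t1 ((d ∘ G.t1)^[k] y0) ∈ v ∧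
      G.edgeOf ((d ∘ G.t1)^[k] y0) ∈ C ∧
      s (G.t1 ((d ∘ G.t1)^[k] y0)) = !s y0 ∧
      Relation.EqvGen (fun p q => q = G.t1 p ∨ q = d p) y0 (G.t1 ((d ∘ G.t1)^[k] y0)) := by
  classical
  haveI := G.fintype
  have hfinj : Function.Injective (d ∘ G.t1) := hdinj.comp G.t1_invol.injective
  have hex : ∃ j, G.edgeOf (G.t1 ((d ∘ G.t1)^[j] y0)) ∈ B := by
    by_contra hno
    push_neg at hno
    obtain ⟨m, hm, hmy⟩ := exists_periodic (d ∘ G.t1) hfinj y0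
    have hnB : G.edgeOf ((d ∘ G.t1)^[m] y0) ∉ B := by
      obtain ⟨m', rfl⟩ : ∃ m', m = m' + 1 := ⟨m - 1, by omega⟩
      rw [Function.iterate_succ_apply', Function.comp_apply, hd]
      exact hno m'
    rw [hmy] at hnB
    exact hnB h0
  have hspec := Nat.find_spec hex
  have hmin : ∀ j < Nat.find hex, G.edgeOf (G.t1 ((d ∘ G.t1)^[j] y0)) ∉ B :=
    fun j hj => Nat.find_min hex hj
  set k := Nat.find hex with hk
  have hkpos : 0 < k := by
    rcases Nat.eq_zero_or_pos k with h | h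
    · rw [h] at hspec
      simp only [Function.iterate_zero_apply] at hspec
      exact absurd hspec hH0
    · exact h
  have hC : G.edgeOf ((d ∘ G.t1)^[k] y0) ∈ C := by
    obtain ⟨k', hk'⟩ : ∃ k', k = k' + 1 := ⟨k - 1, by omega⟩
    have h1 : G.edgeOf ((d ∘ G.t1)^[k] y0) ∉ B := by
      rw [hk', Function.iterate_succ_apply', Function.comp_apply, hd]
      exact hmin k' (by omega)
    have h2 : G.edgeOf ((d ∘ G.t1)^[k] y0) ∈ B ∪ C := by
      rw [hcover]; exact ⟨_, rfl⟩
    exact h2.resolve_left h1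
  refine ⟨k, hkpos, hspec, hmin, ?_, hC, ?_, ?_⟩
  · exact G.at_vertex hvint hspec (by rw [G.t1_invol]; exact hC)
  · rw [hs1, sign_iterate s G.t1 d hs1 hsd]
  · exact Relation.EqvGen.trans _ _ _ (rel_iterate G.t1 d k y0)
      (Relation.EqvGen.rel _ _ (Or.inl rfl))

lemma t1_mem_of_mem_s2 (G : RibbonGraph) {v : Set G.F} (hv : v ∈ G.vertices) {x : G.F}
    (hx : x ∈ v) : G.t1 x ∈ v := by
  obtain ⟨z, rfl⟩ := hv
  exact Relation.EqvGen.trans _ _ _ hx (Relation.EqvGen.rel _ _ (Or.inl rfl))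

lemma card_corner_swap (G : RibbonGraph) {B C : Set (Set G.F)} {v : Set G.F}
    (hv : v ∈ G.vertices)
    (h : Nat.card {x : G.F // x ∈ v ∧ G.edgeOf x ∈ B ∧ G.edgeOf (G.t1 x) ∈ C} ≤ 2) :
    Nat.card {x : G.F // x ∈ v ∧ G.edgeOf x ∈ C ∧ G.edgeOf (G.t1 x) ∈ B} ≤ 2 := by
  haveI := G.fintype
  refine le_trans (Nat.card_le_card_of_injective
    (fun y => ⟨G.t1 y.1, G.t1_mem_of_mem_s2 hv y.2.1, y.2.2.2,
      by rw [G.t1_invol]; exact y.2.2.1⟩) ?_) h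
  intro a b hab
  have : G.t1 a.1 = G.t1 b.1 := congrArg Subtype.val hab
  exact Subtype.ext (G.t1_invol.injective this)

end Walk

section Induced

lemma isInducedVia_pdual (G P : RibbonGraph) (B C : Set (Set G.F)) (v : Set G.F)
    (φ : P.F → G.F) (hP : G.IsInducedVia P B φ)
    (hcover : B ∪ C = G.edgeSet)
    (hvint : G.verticesIn B ∩ G.verticesIn C = {v})
    (hcard : Nat.card {x : G.F // x ∈ v ∧ G.edgeOf x ∈ B ∧ G.edgeOf (G.t1 x) ∈ C} ≤ 2)
    (A : Set (Set G.F)) :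
    (G.pdual A).IsInducedVia (P.pdual {e | e ∈ P.edgeSet ∧ φ '' e ∈ A}) B φ := by
  classical
  haveI := G.fintype
  obtain ⟨hBsub, hinj, hrange, hφ0, hφ2, hφ1⟩ := hP
  obtain ⟨s, hs0, hs1, hs2⟩ := G.orientable
  have hsd : ∀ z, s ((G.pdual A).t2 z) = !s z := by
    intro z
    rw [pdual_t2_apply]
    split
    · exact hs0 z
    · exact hs2 z
  have himg : ∀ x : P.F, φ '' (P.edgeOf x) = G.edgeOf (φ x) := by
    intro x
    unfold edgeOf
    simp only [Set.image_insert_eq, Set.image_singleton, hφ0, hφ2]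
  have hmem_iff : ∀ x : P.F,
      (P.edgeOf x ∈ {e | e ∈ P.edgeSet ∧ φ '' e ∈ A}) ↔ G.edgeOf (φ x) ∈ A := by
    intro x
    simp only [Set.mem_setOf_eq, himg]
    exact ⟨fun h => h.2, fun h => ⟨⟨x, rfl⟩, h⟩⟩
  have hrφ : ∀ x : P.F, G.edgeOf (φ x) ∈ B := by
    intro x
    have hx : φ x ∈ Set.range φ := ⟨x, rfl⟩
    rw [hrange] at hx
    exact hx
  refine ⟨?_, hinj, ?_, ?_, ?_, ?_⟩
  · rw [edgeSet_pdual]; exact hBsub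
  · simp only [edgeOf_pdual]; exact hrange
  · -- t0
    intro x
    rw [pdual_t0_apply, pdual_t0_apply]
    by_cases h : G.edgeOf (φ x) ∈ A
    · rw [if_pos ((hmem_iff x).mpr h), if_pos h]
      exact hφ2 x
    · rw [if_neg (fun hh => h ((hmem_iff x).mp hh)), if_neg h]
      exact hφ0 x
  · -- t2
    intro x
    rw [pdual_t2_apply, pdual_t2_apply]
    by_cases h : G.edgeOf (φ x) ∈ A
    · rw [if_pos ((hmem_iff x).mpr h), if_pos h]
      exact hφ0 x
    · rw [if_neg (fun hh => h ((hmem_iff x).mp hh)), if_neg h]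
      exact hφ2 x
  · -- t1
    intro x
    simp only [pdual_t1, edgeOf_pdual]
    by_cases hH0 : G.edgeOf (G.t1 (φ x)) ∈ B
    · obtain ⟨k0, heq, hav⟩ := hφ1 x
      have hk0 : k0 = 0 := by
        by_contra h
        exact hav 0 (Nat.pos_of_ne_zero h) (by simpa using hH0)
      refine ⟨0, ?_, by omega⟩
      rw [hk0] at heq
      simpa using heq
    · obtain ⟨k0, heq, hav⟩ := hφ1 x
      obtain ⟨kσ, hkσpos, hKB, hKmin, hKv, hKC, hKs, -⟩ :=
        G.walk_core B C hcover v hvint G.t2 G.edgeOf_t2 G.t2_invol.injective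
          s hs1 hs2 (φ x) (hrφ x) hH0
      have hk0B : G.edgeOf (G.t1 ((G.t2 ∘ G.t1)^[k0] (φ x))) ∈ B := by
        rw [← heq]; exact hrφ (P.t1 x)
      have hkeq : kσ = k0 := find_unique hKB hKmin hk0B hav
      have hbσ : G.t1 ((G.t2 ∘ G.t1)^[kσ] (φ x)) = φ (P.t1 x) := by
        rw [hkeq, ← heq]
      obtain ⟨kA, hkApos, hAB, hAmin, hAv, hAC, hAs, -⟩ :=
        G.walk_core B C hcover v hvint ((G.pdual A).t2) (G.edgeOf_pdual_t2 A)
          (G.pdual A).t2_invol.injective s hs1 hsd (φ x) (hrφ x) hH0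
      set bσ := G.t1 ((G.t2 ∘ G.t1)^[kσ] (φ x)) with hbσdef
      set bA := G.t1 (((G.pdual A).t2 ∘ G.t1)^[kA] (φ x)) with hbAdef
      have hC0 : G.edgeOf (G.t1 (φ x)) ∈ C := by
        have h2 : G.edgeOf (G.t1 (φ x)) ∈ B ∪ C := by rw [hcover]; exact ⟨_, rfl⟩
        exact h2.resolve_left hH0
      have hy0v : φ x ∈ v := G.at_vertex hvint (hrφ x) hC0
      have hmain : bA = φ (P.t1 x) := by
        by_contra hne
        have hy0σ : φ x ≠ bσ := by
          intro h
          rw [← h] at hKs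
          simp at hKs
        have hy0A : φ x ≠ bA := by
          intro h
          rw [← h] at hAs
          simp at hAs
        have hσA : bσ ≠ bA := by
          rw [hbσ]
          exact fun h => hne h.symm
        have h3 : 3 ≤ Nat.card {x : G.F // x ∈ v ∧ G.edgeOf x ∈ B ∧ G.edgeOf (G.t1 x) ∈ C} := by
          refine three_le_card (a := ⟨φ x, hy0v, hrφ x, hC0⟩)
            (b := ⟨bσ, hKv, hKB, by rw [hbσdef, G.t1_invol]; exact hKC⟩)
            (c := ⟨bA, hAv, hAB, by rw [hbAdef, G.t1_invol]; exact hAC⟩)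
            ?_ ?_ ?_
          · exact fun h => hy0σ (congrArg Subtype.val h)
          · exact fun h => hy0A (congrArg Subtype.val h)
          · exact fun h => hσA (congrArg Subtype.val h)
        omega
      exact ⟨kA, hmain.symm, hAmin⟩

end Induced
end RibbonGraph
/-- Partial duality preserves joins: if `G = P ∨ Q` and `A ⊆ E(G)`, then
`G^A = P^{A ∩ E(P)} ∨ Q^{A ∩ E(Q)}`. -/
theorem pdual_of_join (G P Q : RibbonGraph) (Bp Bq : Set (Set G.F))
    (v : Set G.F) (φp : P.F → G.F) (φq : Q.F → G.F)
    (hP : RibbonGraph.IsInducedVia G P Bp φp)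
    (hQ : RibbonGraph.IsInducedVia G Q Bq φq)
    (hJ : G.IsJoinAt Bp Bq v)
    (hcover : Bp ∪ Bq = G.edgeSet)
    (A : Set (Set G.F)) (hA : A ⊆ G.edgeSet) :
    RibbonGraph.IsJoinDecomp (G.pdual A)
      (P.pdual {e | e ∈ P.edgeSet ∧ φp '' e ∈ A})
      (Q.pdual {e | e ∈ Q.edgeSet ∧ φq '' e ∈ A}) := by
  classical
  haveI := G.fintype
  obtain ⟨⟨hBsub, hCsub, hBne, hCne, hdisj, hv, hvint⟩, hcard⟩ := hJ
  obtain ⟨s, hs0, hs1, hs2⟩ := G.orientable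
  have hsd : ∀ z, s ((G.pdual A).t2 z) = !s z := by
    intro z
    rw [RibbonGraph.pdual_t2_apply]
    split
    · exact hs0 z
    · exact hs2 z
  have hv2 : v ∈ G.verticesIn Bp ∩ G.verticesIn Bq := by rw [hvint]; rfl
  obtain ⟨-, p, hpv, hpB⟩ := hv2.1
  obtain ⟨-, q, hqv, hqB⟩ := hv2.2
  obtain ⟨z, rfl⟩ := hv
  have hpq : G.vertexRel p q :=
    Relation.EqvGen.trans _ _ _ (Relation.EqvGen.symm _ _ hpv) hqv
  have hqnB : G.edgeOf q ∉ Bp := fun h => (Set.disjoint_left.mp hdisj h) hqB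
  obtain ⟨a1, -, ha1B, ha1nB⟩ := G.crossing Bp hpq hpB hqnB
  have ha1C : G.edgeOf (G.t1 a1) ∈ Bq := by
    have h2 : G.edgeOf (G.t1 a1) ∈ Bp ∪ Bq := by rw [hcover]; exact ⟨_, rfl⟩
    exact h2.resolve_left ha1nB
  have ha1v : a1 ∈ G.vertexOf z := G.at_vertex hvint ha1B ha1C
  obtain ⟨k1, -, h1B, h1min, h1v, h1C, h1s, h1rel⟩ :=
    G.walk_core Bp Bq hcover (G.vertexOf z) hvint ((G.pdual A).t2) (G.edgeOf_pdual_t2 A)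
      (G.pdual A).t2_invol.injective s hs1 hsd a1 ha1B ha1nB
  set b2 := G.t1 (((G.pdual A).t2 ∘ G.t1)^[k1] a1) with hb2def
  have hb2rel : (G.pdual A).vertexRel a1 b2 := h1rel
  have ha1b2 : a1 ≠ b2 := by
    intro h
    rw [← h] at h1s
    simp at h1s
  have hb2v : b2 ∈ G.vertexOf z := h1v
  have hb2B : G.edgeOf b2 ∈ Bp := h1B
  have hb2C : G.edgeOf (G.t1 b2) ∈ Bq := by rw [hb2def, G.t1_invol]; exact h1C
  have hXsub : ∀ u : G.F, G.edgeOf u ∈ Bp → G.edgeOf (G.t1 u) ∈ Bq →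
      (G.pdual A).vertexRel a1 u := by
    intro u huB huC
    by_cases h1 : u = a1
    · rw [h1]; exact Relation.EqvGen.refl a1
    by_cases h2 : u = b2
    · rw [h2]; exact hb2rel
    exfalso
    have h3 : 3 ≤ Nat.card {x : G.F // x ∈ G.vertexOf z ∧
        G.edgeOf x ∈ Bp ∧ G.edgeOf (G.t1 x) ∈ Bq} := by
      refine RibbonGraph.three_le_card (a := ⟨a1, ha1v, ha1B, ha1C⟩)
        (b := ⟨b2, hb2v, hb2B, hb2C⟩)
        (c := ⟨u, G.at_vertex hvint huB huC, huB, huC⟩) ?_ ?_ ?_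
      · exact fun h => ha1b2 (congrArg Subtype.val h)
      · exact fun h => h1 (congrArg Subtype.val h).symm
      · exact fun h => h2 (congrArg Subtype.val h).symm
    omega
  set v' := (G.pdual A).vertexOf a1 with hv'def
  have hv'mem : v' ∈ (G.pdual A).vertices := ⟨a1, rfl⟩
  have hkey : (G.pdual A).verticesIn Bp ∩ (G.pdual A).verticesIn Bq = {v'} := by
    apply Set.eq_singleton_iff_unique_mem.mpr
    constructor
    · constructor
      · exact ⟨hv'mem, a1, Relation.EqvGen.refl a1,
          by rw [RibbonGraph.edgeOf_pdual]; exact ha1B⟩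
      · exact ⟨hv'mem, G.t1 a1, Relation.EqvGen.rel _ _ (Or.inl rfl),
          by rw [RibbonGraph.edgeOf_pdual]; exact ha1C⟩
    · rintro w ⟨⟨⟨z1, rfl⟩, p1, hp1w, hp1B⟩, ⟨-, q1, hq1w, hq1B⟩⟩
      rw [RibbonGraph.edgeOf_pdual] at hp1B hq1B
      have hrel : (G.pdual A).vertexRel p1 q1 :=
        Relation.EqvGen.trans _ _ _ (Relation.EqvGen.symm _ _ hp1w) hq1w
      have hq1nB : (G.pdual A).edgeOf q1 ∉ Bp := by
        rw [RibbonGraph.edgeOf_pdual]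
        exact fun h => (Set.disjoint_left.mp hdisj h) hq1B
      obtain ⟨u, hurel, huB, hunB⟩ := (G.pdual A).crossing Bp hrel
        (by rw [RibbonGraph.edgeOf_pdual]; exact hp1B) hq1nB
      rw [RibbonGraph.edgeOf_pdual] at huB hunB
      have hunB' : G.edgeOf (G.t1 u) ∉ Bp := hunB
      have huC : G.edgeOf (G.t1 u) ∈ Bq := by
        have h2 : G.edgeOf (G.t1 u) ∈ Bp ∪ Bq := by rw [hcover]; exact ⟨_, rfl⟩
        exact h2.resolve_left hunB'
      have hau : (G.pdual A).vertexRel a1 u := hXsub u huB huC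
      have hzu : (G.pdual A).vertexRel z1 a1 :=
        Relation.EqvGen.trans _ _ _ hp1w
          (Relation.EqvGen.trans _ _ _ hurel (Relation.EqvGen.symm _ _ hau))
      exact (G.pdual A).vertexOf_congr hzu
  have hcard' : Nat.card {x : (G.pdual A).F // x ∈ v' ∧ (G.pdual A).edgeOf x ∈ Bp ∧
      (G.pdual A).edgeOf ((G.pdual A).t1 x) ∈ Bq} ≤ 2 := by
    have hmap : ∀ y : {x : (G.pdual A).F // x ∈ v' ∧ (G.pdual A).edgeOf x ∈ Bp ∧
        (G.pdual A).edgeOf ((G.pdual A).t1 x) ∈ Bq},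
        y.1 ∈ G.vertexOf z ∧ G.edgeOf y.1 ∈ Bp ∧ G.edgeOf (G.t1 y.1) ∈ Bq := by
      rintro ⟨y, hyv, hyB, hyC⟩
      rw [RibbonGraph.edgeOf_pdual] at hyB hyC
      have hyC' : G.edgeOf (G.t1 y) ∈ Bq := hyC
      exact ⟨G.at_vertex hvint hyB hyC', hyB, hyC'⟩
    refine le_trans (Nat.card_le_card_of_injective (fun y => ⟨y.1, hmap y⟩) ?_) hcard
    intro a b h
    rw [Subtype.ext_iff] at h ⊢
    exact h
  refine ⟨Bp, Bq, v',
    ⟨φp, G.isInducedVia_pdual P Bp Bq (G.vertexOf z) φp hP hcover hvint hcard A⟩,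
    ⟨φq, G.isInducedVia_pdual Q Bq Bp (G.vertexOf z) φq hQ
      (by rw [Set.union_comm]; exact hcover)
      (by rw [Set.inter_comm]; exact hvint)
      (G.card_corner_swap ⟨z, rfl⟩ hcard) A⟩,
    ⟨⟨?_, ?_, hBne, hCne, hdisj, hv'mem, hkey⟩, hcard'⟩, ?_⟩
  · rw [RibbonGraph.edgeSet_pdual]; exact hBsub
  · rw [RibbonGraph.edgeSet_pdual]; exact hCsub
  · rw [RibbonGraph.edgeSet_pdual]; exact hcover
end
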